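/- arXiv:1411.7315 — 2 statements merged into one kernel-verified Lean document; each statement's English description precedes it below -/
import Mathlib

section
/- For every string s ∈ Σ* and every nonterminal A of G, the minimum score of a derivation A ⇒* s in the augmented grammar G_e equals 1 if and only if min{ d_ed(s, s') : s' ∈ Σ*, A ⇒* s' in G } = 1; that is, A derives s in G_e with a parse of score 1 (and none of score 0) exactly when there exists s' with A ⇒* s' in G and d_ed(s, s') = 1. -/
/-- A scored production of a grammar: a left-hand-side nonterminal, a right-hand-side
string of nonterminals and terminals, and a score (edit cost). -/
structure ScoredProd (N : Type*) (T : Type*) where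
  lhs : N
  rhs : List (N ⊕ T)
  score : ℕ

/-- `ScoredDerives P u v c` : from the sentential form `u` one can derive the sentential
form `v` using productions from `P` whose scores sum to `c`. -/
inductive ScoredDerives {N T : Type*} (P : Set (ScoredProd N T)) :
    List (N ⊕ T) → List (N ⊕ T) → ℕ → Prop
  | refl (w : List (N ⊕ T)) : ScoredDerives P w w 0
  | step {u l r : List (N ⊕ T)} {p : ScoredProd N T} {c : ℕ} :
      ScoredDerives P u (l ++ [Sum.inl p.lhs] ++ r) c → p ∈ P →
      ScoredDerives P u (l ++ p.rhs ++ r) (c + p.score)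

/-- A context-free grammar in Chomsky normal form: binary rules `A → BC`,
terminal rules `A → a`, and possibly the rule `S → ε` (recorded by `eps`). -/
structure CNF (N : Type*) (T : Type*) where
  start : N
  bin : Set (N × N × N)
  term : Set (N × T)
  eps : Prop

/-- The productions of the CNF grammar `G`, all of score `0`. -/
def CNF.prods {N T : Type*} (G : CNF N T) : Set (ScoredProd N T) :=
  {p | (∃ A B C, (A, B, C) ∈ G.bin ∧ p = ⟨A, [Sum.inl B, Sum.inl C], 0⟩) ∨
       (∃ A a, (A, a) ∈ G.term ∧ p = ⟨A, [Sum.inr a], 0⟩) ∨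
       (G.eps ∧ p = ⟨G.start, [], 0⟩)}

/-- Lift a production of `G` to the augmented grammar `G_e`, whose nonterminals are
`N ⊕ Unit` (with `Sum.inr ()` playing the role of the fresh nonterminal `I`). -/
def liftProd {N T : Type*} (p : ScoredProd N T) : ScoredProd (N ⊕ Unit) T :=
  ⟨Sum.inl p.lhs, p.rhs.map (Sum.map Sum.inl id), p.score⟩

/-- The productions of the augmented grammar `G_e`: the original productions of `G`
(score 0), elementary substitution rules `A → y` of score 1 (for `A` having some
terminal rule and `y` with `A → y ∉ P`), elementary insertion rules `I → x` of score 1,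
rules `A → IA`, `A → AI` of score 0, `I → II` of score 0, and elementary deletion rules
`A → ε` of score 1 for every terminal rule `A → x` of `G`. -/
def CNF.augProds {N T : Type*} (G : CNF N T) : Set (ScoredProd (N ⊕ Unit) T) :=
  (liftProd '' G.prods) ∪
  {p | ∃ A y, (∃ x, (A, x) ∈ G.term) ∧ (A, y) ∉ G.term ∧
        p = ⟨Sum.inl A, [Sum.inr y], 1⟩} ∪
  {p | ∃ x, p = ⟨Sum.inr (), [Sum.inr x], 1⟩} ∪
  {p | ∃ A : N, p = ⟨Sum.inl A, [Sum.inl (Sum.inr ()), Sum.inl (Sum.inl A)], 0⟩ ∨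
                p = ⟨Sum.inl A, [Sum.inl (Sum.inl A), Sum.inl (Sum.inr ())], 0⟩} ∪
  {(⟨Sum.inr (), [Sum.inl (Sum.inr ()), Sum.inl (Sum.inr ())], 0⟩ : ScoredProd (N ⊕ Unit) T)} ∪
  {p | ∃ A x, (A, x) ∈ G.term ∧ p = ⟨Sum.inl A, [], 1⟩}

/-- `A ⇒* s` in the grammar `G`. -/
def CNF.Derives {N T : Type*} (G : CNF N T) (A : N) (s : List T) : Prop :=
  ∃ u, ScoredDerives G.prods [Sum.inl A] (s.map Sum.inr) u

/-- The language of `G`. -/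
def CNF.lang {N T : Type*} (G : CNF N T) : Set (List T) := {s | G.Derives G.start s}

/-- `A ⇒* s` in the augmented grammar `G_e` with a derivation of score exactly `u`. -/
def CNF.augDerives {N T : Type*} (G : CNF N T) (A : N ⊕ Unit) (s : List T) (u : ℕ) : Prop :=
  ScoredDerives G.augProds [Sum.inl A] (s.map Sum.inr) u

/-- Cost structure for Levenshtein distance (as in the older Mathlib
`Mathlib/Data/List/EditDistance/Defs.lean`, since removed). -/
structure Levenshtein.Cost (α β δ : Type*) where
  delete : α → δ
  insert : β → δ
  substitute : α → β → δ

/-- The default unit-cost structure. -/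
def Levenshtein.defaultCost {α : Type*} [DecidableEq α] : Levenshtein.Cost α α ℕ where
  delete _ := 1
  insert _ := 1
  substitute a b := if a = b then 0 else 1

/-- Inner step of the Levenshtein dynamic program (older Mathlib). -/
def Levenshtein.impl {α β δ : Type*} (C : Levenshtein.Cost α β δ) [AddZeroClass δ] [Min δ]
    (xs : List α) (y : β) (d : {r : List δ // 0 < r.length}) :
    {r : List δ // 0 < r.length} :=
  let ⟨ds, w⟩ := d
  xs.zip (ds.zip ds.tail) |>.foldr
    (init := ⟨[C.insert y + ds.getLast (List.ne_nil_of_length_pos w)], by simp⟩)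
    (fun ⟨x, d₀, d₁⟩ ⟨r, w⟩ =>
      ⟨min (C.delete x + r[0]) (min (C.insert y + d₀) (C.substitute x y + d₁)) :: r, by simp⟩)

/-- Levenshtein distances of all suffixes (older Mathlib). -/
def suffixLevenshtein {α β δ : Type*} (C : Levenshtein.Cost α β δ) [AddZeroClass δ] [Min δ]
    (xs : List α) (ys : List β) : {r : List δ // 0 < r.length} :=
  ys.foldr
    (Levenshtein.impl C xs)
    (xs.foldr (init := ⟨[0], by simp⟩) (fun a ⟨ds, w⟩ => ⟨(C.delete a + ds[0]) :: ds, by simp⟩))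

/-- The Levenshtein distance (older Mathlib). -/
def levenshtein {α β δ : Type*} (C : Levenshtein.Cost α β δ) [AddZeroClass δ] [Min δ]
    (xs : List α) (ys : List β) : δ :=
  let ⟨r, w⟩ := suffixLevenshtein C xs ys
  r[0]

/-- The standard (unit-cost) string edit distance. -/
def editDist {T : Type*} [DecidableEq T] (s t : List T) : ℕ :=
  levenshtein Levenshtein.defaultCost s t

/-- The language edit distance `d_G(G,s) = min_{z ∈ L(G)} d_ed(s,z)`. -/
noncomputable def dG {N T : Type*} [DecidableEq T] (G : CNF N T) (s : List T) : ℕ :=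
  sInf {d | ∃ z ∈ G.lang, editDist s z = d}


section LevAux

def levRef {α β δ : Type*} (C : Levenshtein.Cost α β δ) [AddZeroClass δ] [Min δ] :
    List α → List β → δ
  | [], [] => 0
  | [], y :: ys => C.insert y + levRef C [] ys
  | x :: xs, [] => C.delete x + levRef C xs []
  | x :: xs, y :: ys => min (C.delete x + levRef C xs (y :: ys))
      (min (C.insert y + levRef C (x :: xs) ys) (C.substitute x y + levRef C xs ys))

theorem levAux_tails_getElem_zero {α γ : Type*} (f : List α → γ) (xs : List α) (h) :
    (xs.tails.map f)[0]'h = f xs := by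
  cases xs <;> rfl

theorem levAux_tails_eq {α γ : Type*} (f : List α → γ) (xs : List α) :
    xs.tails.map f = f xs :: (xs.tails.tail.map f) := by
  cases xs <;> rfl

theorem levAux_impl_cons {α β δ : Type*} (C : Levenshtein.Cost α β δ) [AddZeroClass δ] [Min δ]
    (x : α) (xs : List α) (y : β) (a b : δ) (M : List δ) (w) :
    (Levenshtein.impl C (x :: xs) y ⟨a :: b :: M, w⟩).1 =
      min (C.delete x + (Levenshtein.impl C xs y ⟨b :: M, by simp⟩).1[0]'(Levenshtein.impl C xs y ⟨b :: M, by simp⟩).2)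
        (min (C.insert y + a) (C.substitute x y + b)) ::
        (Levenshtein.impl C xs y ⟨b :: M, by simp⟩).1 := rfl

theorem levAux_impl {α β δ : Type*} (C : Levenshtein.Cost α β δ) [AddZeroClass δ] [Min δ]
    (y : β) (ys : List β) :
    ∀ (xs : List α) (ds : List δ) (w : 0 < ds.length),
      ds = xs.tails.map (fun t => levRef C t ys) →
      (Levenshtein.impl C xs y ⟨ds, w⟩).1 = xs.tails.map (fun t => levRef C t (y :: ys))
  | [], ds, w, h => by subst h; simp [Levenshtein.impl, levRef]
  | x :: xs, ds, w, h => by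
      have hL := levAux_tails_eq (fun t => levRef C t ys) xs
      have ih := levAux_impl C y ys xs
        (levRef C xs ys :: (xs.tails.tail.map (fun t => levRef C t ys))) (by simp) hL.symm
      have h' : ds = levRef C (x :: xs) ys :: levRef C xs ys ::
          (xs.tails.tail.map (fun t => levRef C t ys)) := by
        rw [h, List.tails_cons, List.map_cons, hL]
      subst h'
      rw [levAux_impl_cons]
      simp only [ih]
      rw [levAux_tails_getElem_zero, List.tails_cons, List.map_cons, levRef]

theorem levAux_suffix_nil {α β δ : Type*} (C : Levenshtein.Cost α β δ) [AddZeroClass δ] [Min δ] :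
    ∀ xs : List α, (suffixLevenshtein C xs ([] : List β)).1 =
      xs.tails.map (fun t => levRef C t ([] : List β))
  | [] => by
      show [0] = _
      simp [levRef]
  | x :: xs => by
      have ih := levAux_suffix_nil C xs
      have e : (suffixLevenshtein C (x :: xs) ([] : List β)).1 =
          (C.delete x + (suffixLevenshtein C xs ([] : List β)).1[0]'(suffixLevenshtein C xs ([] : List β)).2) ::
            (suffixLevenshtein C xs ([] : List β)).1 := rfl
      rw [e]
      simp only [ih]
      rw [levAux_tails_getElem_zero, List.tails_cons, List.map_cons, levRef]

theorem levAux_suffix {α β δ : Type*} (C : Levenshtein.Cost α β δ) [AddZeroClass δ] [Min δ]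
    (xs : List α) : ∀ ys : List β,
    (suffixLevenshtein C xs ys).1 = xs.tails.map (fun t => levRef C t ys)
  | [] => levAux_suffix_nil C xs
  | y :: ys => by
      have ih := levAux_suffix C xs ys
      have e : suffixLevenshtein C xs (y :: ys) =
          Levenshtein.impl C xs y (suffixLevenshtein C xs ys) := rfl
      rw [e]
      generalize suffixLevenshtein C xs ys = d at ih ⊢
      obtain ⟨ds, w⟩ := d
      exact levAux_impl C y ys xs ds w ih

theorem levenshtein_eq_levRef {α β δ : Type*} (C : Levenshtein.Cost α β δ) [AddZeroClass δ]
    [Min δ] (xs : List α) (ys : List β) : levenshtein C xs ys = levRef C xs ys := by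
  have e : levenshtein C xs ys =
      (suffixLevenshtein C xs ys).1[0]'(suffixLevenshtein C xs ys).2 := rfl
  rw [e]
  simp only [levAux_suffix]
  rw [levAux_tails_getElem_zero]

@[simp] theorem levenshtein_nil_nil {α β δ : Type*} (C : Levenshtein.Cost α β δ)
    [AddZeroClass δ] [Min δ] : levenshtein C ([] : List α) ([] : List β) = 0 := by
  rw [levenshtein_eq_levRef, levRef]

@[simp] theorem levenshtein_nil_cons {α β δ : Type*} (C : Levenshtein.Cost α β δ)
    [AddZeroClass δ] [Min δ] (y : β) (ys : List β) :
    levenshtein C ([] : List α) (y :: ys) = C.insert y + levenshtein C [] ys := by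
  rw [levenshtein_eq_levRef, levenshtein_eq_levRef, levRef]

@[simp] theorem levenshtein_cons_nil {α β δ : Type*} (C : Levenshtein.Cost α β δ)
    [AddZeroClass δ] [Min δ] (x : α) (xs : List α) :
    levenshtein C (x :: xs) ([] : List β) = C.delete x + levenshtein C xs [] := by
  rw [levenshtein_eq_levRef, levenshtein_eq_levRef, levRef]

@[simp] theorem levenshtein_cons_cons {α β δ : Type*} (C : Levenshtein.Cost α β δ)
    [AddZeroClass δ] [Min δ] (x : α) (xs : List α) (y : β) (ys : List β) :
    levenshtein C (x :: xs) (y :: ys) =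
      min (C.delete x + levenshtein C xs (y :: ys))
        (min (C.insert y + levenshtein C (x :: xs) ys)
          (C.substitute x y + levenshtein C xs ys)) := by
  simp only [levenshtein_eq_levRef]
  rw [levRef]

end LevAux

section EditAux

variable {N T : Type*}

namespace ScoredDerives

theorem cast' {P : Set (ScoredProd N T)} {u v : List (N ⊕ T)} {c c' : ℕ}
    (h : ScoredDerives P u v c) (e : c = c') : ScoredDerives P u v c' := e ▸ h

theorem trans' {P : Set (ScoredProd N T)} {u v w : List (N ⊕ T)} {c d : ℕ}
    (h1 : ScoredDerives P u v c) (h2 : ScoredDerives P v w d) :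
    ScoredDerives P u w (c + d) := by
  induction h2 with
  | refl => exact h1.cast' (by omega)
  | @step l r p c' h hp ih => exact ((ih).step hp).cast' (by omega)

theorem ctx {P : Set (ScoredProd N T)} {u v : List (N ⊕ T)} {c : ℕ}
    (h : ScoredDerives P u v c) (l r : List (N ⊕ T)) :
    ScoredDerives P (l ++ u ++ r) (l ++ v ++ r) c := by
  induction h with
  | refl => exact .refl _
  | @step l' r' p c' h hp ih =>
      have := ScoredDerives.step (p := p) (l := l ++ l') (r := r' ++ r)
        (by simpa [List.append_assoc] using ih) hp
      simpa [List.append_assoc] using this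

theorem single {P : Set (ScoredProd N T)} {p : ScoredProd N T} (hp : p ∈ P) :
    ScoredDerives P [Sum.inl p.lhs] p.rhs p.score := by
  have := ScoredDerives.step (l := []) (r := [])
    (ScoredDerives.refl (P := P) ([] ++ [Sum.inl p.lhs] ++ [])) hp
  simpa using this

theorem append' {P : Set (ScoredProd N T)} {u₁ v₁ u₂ v₂ : List (N ⊕ T)} {c₁ c₂ : ℕ}
    (h1 : ScoredDerives P u₁ v₁ c₁) (h2 : ScoredDerives P u₂ v₂ c₂) :
    ScoredDerives P (u₁ ++ u₂) (v₁ ++ v₂) (c₁ + c₂) := by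
  have a := h1.ctx [] u₂
  have b := h2.ctx v₁ []
  simp only [List.nil_append, List.append_nil] at a b
  exact a.trans' b

end ScoredDerives

/-- Cons-style derivations with a step count. -/
inductive DerN (P : Set (ScoredProd N T)) : List (N ⊕ T) → List (N ⊕ T) → ℕ → ℕ → Prop
  | refl (w) : DerN P w w 0 0
  | head {l r w : List (N ⊕ T)} {p : ScoredProd N T} {c n : ℕ} :
      p ∈ P → DerN P (l ++ p.rhs ++ r) w c n →
      DerN P (l ++ [Sum.inl p.lhs] ++ r) w (p.score + c) (n + 1)

theorem DerN.cast' {P : Set (ScoredProd N T)} {u v : List (N ⊕ T)} {c c' n n' : ℕ}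
    (h : DerN P u v c n) (e : c = c') (e' : n = n') : DerN P u v c' n' := e ▸ e' ▸ h

theorem DerN.snoc {P : Set (ScoredProd N T)} {u v : List (N ⊕ T)} {c n : ℕ}
    (h : DerN P u v c n) :
    ∀ (l r : List (N ⊕ T)) (p : ScoredProd N T), p ∈ P → v = l ++ [Sum.inl p.lhs] ++ r →
      DerN P u (l ++ p.rhs ++ r) (c + p.score) (n + 1) := by
  induction h with
  | refl =>
      intro l r p hp hv
      subst hv
      exact (DerN.head hp (DerN.refl _)).cast' (by omega) rfl
  | @head l' r' w' p' c' n' hp' h ih =>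
      intro l r p hp hv
      exact (DerN.head hp' (ih l r p hp hv)).cast' (by omega) rfl

theorem scoredDerives_iff_derN {P : Set (ScoredProd N T)} {u v : List (N ⊕ T)} {c : ℕ} :
    ScoredDerives P u v c ↔ ∃ n, DerN P u v c n := by
  constructor
  · intro h
    induction h with
    | refl => exact ⟨0, DerN.refl _⟩
    | @step l r p c' h hp ih =>
        obtain ⟨n, hn⟩ := ih
        exact ⟨n + 1, hn.snoc l r p hp rfl⟩
  · rintro ⟨n, hn⟩
    induction hn with
    | refl => exact ScoredDerives.refl _
    | @head l r w' p c' n' hp h ih =>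
        exact ((ScoredDerives.single hp).ctx l r).trans' ih

theorem DerN.start_cases {P : Set (ScoredProd N T)} {u v : List (N ⊕ T)} {c n : ℕ}
    (h : DerN P u v c n) :
    (v = u ∧ c = 0 ∧ n = 0) ∨
    ∃ l r p c' n', p ∈ P ∧ u = l ++ [Sum.inl p.lhs] ++ r ∧
      DerN P (l ++ p.rhs ++ r) v c' n' ∧ c = p.score + c' ∧ n = n' + 1 := by
  cases h with
  | refl w => exact Or.inl ⟨rfl, rfl, rfl⟩
  | head hp h => exact Or.inr ⟨_, _, _, _, _, hp, rfl, h, rfl, rfl⟩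

theorem cons_single_eq {α : Type*} {l r : List α} {x y : α} (h : l ++ [x] ++ r = [y]) :
    l = [] ∧ x = y ∧ r = [] := by
  cases l with
  | nil => simp at h; exact ⟨rfl, h.1, h.2⟩
  | cons a l => simp at h

theorem DerN.all_inr {P : Set (ScoredProd N T)} {u v : List (N ⊕ T)} {c n : ℕ}
    (h : DerN P u v c n) (hu : ∀ a ∈ u, ∃ t, a = Sum.inr t) : v = u ∧ c = 0 ∧ n = 0 := by
  cases h with
  | refl w => exact ⟨rfl, rfl, rfl⟩
  | @head l r w p c' n' hp h =>
      obtain ⟨t, ht⟩ := hu (Sum.inl p.lhs) (by simp)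
      simp at ht

theorem DerN.split {P : Set (ScoredProd N T)} {w v : List (N ⊕ T)} {c n : ℕ}
    (h : DerN P w v c n) :
    ∀ u₁ u₂, w = u₁ ++ u₂ →
      ∃ v₁ v₂ c₁ c₂ n₁ n₂, v = v₁ ++ v₂ ∧ c = c₁ + c₂ ∧ n = n₁ + n₂ ∧
        DerN P u₁ v₁ c₁ n₁ ∧ DerN P u₂ v₂ c₂ n₂ := by
  induction h with
  | refl =>
      intro u₁ u₂ hw
      exact ⟨u₁, u₂, 0, 0, 0, 0, hw, rfl, rfl, DerN.refl _, DerN.refl _⟩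
  | @head l r w p c' n' hp h ih =>
      intro u₁ u₂ hw
      rw [List.append_assoc] at hw
      have key : ∀ m, l = u₁ ++ m → u₂ = m ++ ([Sum.inl p.lhs] ++ r) →
          ∃ v₁ v₂ c₁ c₂ n₁ n₂, w = v₁ ++ v₂ ∧ p.score + c' = c₁ + c₂ ∧
            n' + 1 = n₁ + n₂ ∧ DerN P u₁ v₁ c₁ n₁ ∧ DerN P u₂ v₂ c₂ n₂ := by
        intro m hm1 hm2
        obtain ⟨v₁, v₂, c₁, c₂, n₁, n₂, hv, hcs, hns, d1, d2⟩ :=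
          ih u₁ (m ++ p.rhs ++ r) (by rw [hm1]; simp)
        refine ⟨v₁, v₂, c₁, p.score + c₂, n₁, n₂ + 1, hv, by omega, by omega, d1, ?_⟩
        rw [hm2]
        have := DerN.head (l := m) (r := r) hp d2
        simpa [List.append_assoc] using this
      rcases List.append_eq_append_iff.mp hw with ⟨a', hm1, hm2⟩ | ⟨m, hm1, hm2⟩
      · cases a' with
        | nil => exact key [] (by simp [hm1]) (by simpa using hm2.symm)
        | cons x' m =>
            simp only [List.singleton_append, List.cons_append, List.nil_append, List.cons.injEq] at hm2
            obtain ⟨hx', hr⟩ := hm2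
            obtain ⟨v₁, v₂, c₁, c₂, n₁, n₂, hv, hcs, hns, d1, d2⟩ :=
              ih (l ++ p.rhs ++ m) u₂ (by rw [hr]; simp)
            refine ⟨v₁, v₂, p.score + c₁, c₂, n₁ + 1, n₂, hv, by omega, by omega, ?_, d2⟩
            have := DerN.head (l := l) (r := m) hp d1
            rw [hm1, ← hx']
            simpa using this
      · exact key m hm1 (by rw [hm2])

/-! ### Membership in the production sets -/

theorem mem_prods_cases {G : CNF N T} {p : ScoredProd N T} (hp : p ∈ G.prods) :
    (∃ A B C, (A, B, C) ∈ G.bin ∧ p = ⟨A, [Sum.inl B, Sum.inl C], 0⟩) ∨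
    (∃ A a, (A, a) ∈ G.term ∧ p = ⟨A, [Sum.inr a], 0⟩) ∨
    (G.eps ∧ p = ⟨G.start, [], 0⟩) := hp

theorem mem_prods_bin {G : CNF N T} {A B C : N} (h : (A, B, C) ∈ G.bin) :
    (⟨A, [Sum.inl B, Sum.inl C], 0⟩ : ScoredProd N T) ∈ G.prods :=
  Or.inl ⟨A, B, C, h, rfl⟩

theorem mem_prods_term {G : CNF N T} {A : N} {a : T} (h : (A, a) ∈ G.term) :
    (⟨A, [Sum.inr a], 0⟩ : ScoredProd N T) ∈ G.prods :=
  Or.inr (Or.inl ⟨A, a, h, rfl⟩)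

theorem mem_prods_eps {G : CNF N T} (h : G.eps) :
    (⟨G.start, [], 0⟩ : ScoredProd N T) ∈ G.prods :=
  Or.inr (Or.inr ⟨h, rfl⟩)

theorem prods_score_eq_zero {G : CNF N T} {p : ScoredProd N T} (hp : p ∈ G.prods) :
    p.score = 0 := by
  rcases mem_prods_cases hp with ⟨A, B, C, _, rfl⟩ | ⟨A, a, _, rfl⟩ | ⟨_, rfl⟩ <;> rfl

theorem prods_deriv_score_zero {G : CNF N T} {u v : List (N ⊕ T)} {c : ℕ}
    (h : ScoredDerives G.prods u v c) : c = 0 := by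
  induction h with
  | refl => rfl
  | @step l r p c' h hp ih => simp [ih, prods_score_eq_zero hp]

theorem mem_aug_cases {G : CNF N T} {p : ScoredProd (N ⊕ Unit) T} (hp : p ∈ G.augProds) :
    (∃ q, q ∈ G.prods ∧ liftProd q = p) ∨
    (∃ A y, (∃ x, (A, x) ∈ G.term) ∧ (A, y) ∉ G.term ∧
        p = ⟨Sum.inl A, [Sum.inr y], 1⟩) ∨
    (∃ x, p = ⟨Sum.inr (), [Sum.inr x], 1⟩) ∨
    (∃ A : N, p = ⟨Sum.inl A, [Sum.inl (Sum.inr ()), Sum.inl (Sum.inl A)], 0⟩ ∨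
              p = ⟨Sum.inl A, [Sum.inl (Sum.inl A), Sum.inl (Sum.inr ())], 0⟩) ∨
    (p = ⟨Sum.inr (), [Sum.inl (Sum.inr ()), Sum.inl (Sum.inr ())], 0⟩) ∨
    (∃ A x, (A, x) ∈ G.term ∧ p = ⟨Sum.inl A, [], 1⟩) := by
  simp only [CNF.augProds, Set.mem_union, Set.mem_setOf_eq, Set.mem_image,
    Set.mem_singleton_iff, or_assoc] at hp
  exact hp

theorem mem_aug_lift {G : CNF N T} {q : ScoredProd N T} (h : q ∈ G.prods) :
    liftProd q ∈ G.augProds := by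
  simp only [CNF.augProds, Set.mem_union, Set.mem_image]
  exact Or.inl (Or.inl (Or.inl (Or.inl (Or.inl ⟨q, h, rfl⟩))))

theorem mem_aug_sub {G : CNF N T} {A : N} {y : T} (h1 : ∃ x, (A, x) ∈ G.term)
    (h2 : (A, y) ∉ G.term) :
    (⟨Sum.inl A, [Sum.inr y], 1⟩ : ScoredProd (N ⊕ Unit) T) ∈ G.augProds := by
  simp only [CNF.augProds, Set.mem_union, Set.mem_setOf_eq]
  exact Or.inl (Or.inl (Or.inl (Or.inl (Or.inr ⟨A, y, h1, h2, rfl⟩))))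

theorem mem_aug_ins {G : CNF N T} (x : T) :
    (⟨Sum.inr (), [Sum.inr x], 1⟩ : ScoredProd (N ⊕ Unit) T) ∈ G.augProds := by
  simp only [CNF.augProds, Set.mem_union, Set.mem_setOf_eq]
  exact Or.inl (Or.inl (Or.inl (Or.inr ⟨x, rfl⟩)))

theorem mem_aug_IA {G : CNF N T} (A : N) :
    (⟨Sum.inl A, [Sum.inl (Sum.inr ()), Sum.inl (Sum.inl A)], 0⟩ :
      ScoredProd (N ⊕ Unit) T) ∈ G.augProds := by
  simp only [CNF.augProds, Set.mem_union, Set.mem_setOf_eq]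
  exact Or.inl (Or.inl (Or.inr ⟨A, Or.inl rfl⟩))

theorem mem_aug_AI {G : CNF N T} (A : N) :
    (⟨Sum.inl A, [Sum.inl (Sum.inl A), Sum.inl (Sum.inr ())], 0⟩ :
      ScoredProd (N ⊕ Unit) T) ∈ G.augProds := by
  simp only [CNF.augProds, Set.mem_union, Set.mem_setOf_eq]
  exact Or.inl (Or.inl (Or.inr ⟨A, Or.inr rfl⟩))

theorem mem_aug_del {G : CNF N T} {A : N} {x : T} (h : (A, x) ∈ G.term) :
    (⟨Sum.inl A, [], 1⟩ : ScoredProd (N ⊕ Unit) T) ∈ G.augProds := by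
  simp only [CNF.augProds, Set.mem_union, Set.mem_setOf_eq]
  exact Or.inr ⟨A, x, h, rfl⟩

/-! ### Erasing the insertion nonterminal -/

def eraseSym : ((N ⊕ Unit) ⊕ T) → List (N ⊕ T)
  | Sum.inl (Sum.inl A) => [Sum.inl A]
  | Sum.inl (Sum.inr _) => []
  | Sum.inr t => [Sum.inr t]

def eraseF (w : List ((N ⊕ Unit) ⊕ T)) : List (N ⊕ T) := w.flatMap eraseSym

@[simp] theorem eraseF_nil : eraseF ([] : List ((N ⊕ Unit) ⊕ T)) = [] := rfl

@[simp] theorem eraseF_cons (x : (N ⊕ Unit) ⊕ T) (w : List ((N ⊕ Unit) ⊕ T)) :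
    eraseF (x :: w) = eraseSym x ++ eraseF w := rfl

@[simp] theorem eraseF_append (a b : List ((N ⊕ Unit) ⊕ T)) :
    eraseF (a ++ b) = eraseF a ++ eraseF b := by
  simp [eraseF]

def liftSym : (N ⊕ T) → ((N ⊕ Unit) ⊕ T) := Sum.map Sum.inl id

def liftF (w : List (N ⊕ T)) : List ((N ⊕ Unit) ⊕ T) := w.map liftSym

@[simp] theorem eraseF_liftF (w : List (N ⊕ T)) : eraseF (liftF w) = w := by
  induction w with
  | nil => rfl
  | cons a w ih => cases a <;> simp [liftF, liftSym, eraseSym, ih] <;>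
      simpa [liftF, liftSym] using ih

@[simp] theorem eraseF_map_inr (s : List T) :
    eraseF ((s.map Sum.inr : List ((N ⊕ Unit) ⊕ T))) = s.map Sum.inr := by
  induction s with
  | nil => rfl
  | cons a s ih => simp [eraseSym, ih]

theorem erase_zero {G : CNF N T} :
    ∀ {u v : List ((N ⊕ Unit) ⊕ T)} {c : ℕ}, ScoredDerives G.augProds u v c → c = 0 →
      ScoredDerives G.prods (eraseF u) (eraseF v) 0 := by
  intro u v c h
  induction h with
  | refl => intro _; exact ScoredDerives.refl _
  | @step l r p c' h hp ih =>
      intro hc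
      have hc' : c' = 0 := by omega
      have hs : p.score = 0 := by omega
      have IH := ih hc'
      rcases mem_aug_cases hp with ⟨q, hq, rfl⟩ | ⟨A, y, _, _, rfl⟩ | ⟨x, rfl⟩ |
        ⟨A, rfl | rfl⟩ | rfl | ⟨A, x, _, rfl⟩
      · -- lifted production
        have hq0 : q.score = 0 := prods_score_eq_zero hq
        have step := ScoredDerives.step (l := eraseF l) (r := eraseF r) (p := q)
          (by simpa [liftProd, eraseSym] using IH) hq
        have : (0 : ℕ) + q.score = 0 := by omega
        rw [this] at step
        have hrhs : eraseF (liftProd q).rhs = q.rhs := by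
          simpa [liftProd, liftF, liftSym] using eraseF_liftF (N := N) (T := T) q.rhs
        simpa [hrhs] using step
      · simp at hs
      · simp at hs
      · simpa [eraseSym] using IH
      · simpa [eraseSym] using IH
      · simpa [eraseSym] using IH
      · simp at hs

theorem aug_zero_to_derives {G : CNF N T} {A : N} {s : List T}
    (h : ScoredDerives G.augProds [Sum.inl (Sum.inl A)] (s.map Sum.inr) 0) :
    G.Derives A s := by
  refine ⟨0, ?_⟩
  have := erase_zero h rfl
  simpa [eraseSym] using this

theorem lift_derives {G : CNF N T} {u v : List (N ⊕ T)} {c : ℕ}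
    (h : ScoredDerives G.prods u v c) :
    ScoredDerives G.augProds (liftF u) (liftF v) c := by
  induction h with
  | refl => exact ScoredDerives.refl _
  | @step l r p c' h hp ih =>
      have step := ScoredDerives.step (l := liftF l) (r := liftF r) (p := liftProd p)
        (by simpa [liftF, liftSym, liftProd] using ih) (mem_aug_lift hp)
      simpa [liftF, liftSym, liftProd] using step

theorem derives_to_aug_zero {G : CNF N T} {A : N} {s : List T} (h : G.Derives A s) :
    ScoredDerives G.augProds [Sum.inl (Sum.inl A)] (s.map Sum.inr) 0 := by
  obtain ⟨u, hu⟩ := h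
  have h0 : u = 0 := prods_deriv_score_zero hu
  subst h0
  have := lift_derives (G := G) hu
  simpa [liftF, liftSym, Function.comp_def] using this

/-! ### One-step edits and the Levenshtein distance -/

def OneEdit {T : Type*} (s t : List T) : Prop :=
  (∃ u v y, s = u ++ y :: v ∧ t = u ++ v) ∨
  (∃ u v y, s = u ++ v ∧ t = u ++ y :: v) ∨
  (∃ u v x y, s = u ++ x :: v ∧ t = u ++ y :: v)

theorem OneEdit.append_right {T : Type*} {s t : List T} (h : OneEdit s t) (w : List T) :
    OneEdit (s ++ w) (t ++ w) := by
  rcases h with ⟨u, v, y, rfl, rfl⟩ | ⟨u, v, y, rfl, rfl⟩ | ⟨u, v, x, y, rfl, rfl⟩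
  · exact Or.inl ⟨u, v ++ w, y, by simp, by simp⟩
  · exact Or.inr (Or.inl ⟨u, v ++ w, y, by simp, by simp⟩)
  · exact Or.inr (Or.inr ⟨u, v ++ w, x, y, by simp, by simp⟩)

theorem OneEdit.append_left {T : Type*} {s t : List T} (h : OneEdit s t) (w : List T) :
    OneEdit (w ++ s) (w ++ t) := by
  rcases h with ⟨u, v, y, rfl, rfl⟩ | ⟨u, v, y, rfl, rfl⟩ | ⟨u, v, x, y, rfl, rfl⟩
  · exact Or.inl ⟨w ++ u, v, y, by simp, by simp⟩
  · exact Or.inr (Or.inl ⟨w ++ u, v, y, by simp, by simp⟩)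
  · exact Or.inr (Or.inr ⟨w ++ u, v, x, y, by simp, by simp⟩)

theorem OneEdit.split {T : Type*} {s t₁ t₂ : List T} (h : OneEdit s (t₁ ++ t₂)) :
    (∃ s₁, s = s₁ ++ t₂ ∧ OneEdit s₁ t₁) ∨ (∃ s₂, s = t₁ ++ s₂ ∧ OneEdit s₂ t₂) := by
  rcases h with ⟨u, v, y, rfl, huv⟩ | ⟨u, v, y, rfl, huv⟩ | ⟨u, v, x, y, rfl, huv⟩
  · -- deletion edit: t₁ ++ t₂ = u ++ v
    rcases List.append_eq_append_iff.mp huv with ⟨a, ha1, ha2⟩ | ⟨a, ha1, ha2⟩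
    · subst ha1; subst ha2
      exact Or.inr ⟨a ++ y :: v, by simp, Or.inl ⟨a, v, y, by simp, rfl⟩⟩
    · subst ha1; subst ha2
      exact Or.inl ⟨u ++ y :: a, by simp, Or.inl ⟨u, a, y, rfl, rfl⟩⟩
  · -- insertion edit: t₁ ++ t₂ = u ++ y :: v
    rcases List.append_eq_append_iff.mp huv with ⟨a, ha1, ha2⟩ | ⟨a, ha1, ha2⟩
    · subst ha1; subst ha2
      exact Or.inr ⟨a ++ v, by simp, Or.inr (Or.inl ⟨a, v, y, rfl, rfl⟩)⟩
    · cases a with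
      | nil =>
          simp only [List.nil_append] at ha2
          subst ha1
          cases ha2
          exact Or.inr ⟨v, by simp, Or.inr (Or.inl ⟨[], v, y, rfl, rfl⟩)⟩
      | cons z a =>
          simp only [List.cons_append, List.cons.injEq] at ha2
          obtain ⟨rfl, ha2⟩ := ha2
          subst ha1; subst ha2
          exact Or.inl ⟨u ++ a, by simp, Or.inr (Or.inl ⟨u, a, y, rfl, rfl⟩)⟩
  · -- substitution edit: t₁ ++ t₂ = u ++ y :: v
    rcases List.append_eq_append_iff.mp huv with ⟨a, ha1, ha2⟩ | ⟨a, ha1, ha2⟩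
    · subst ha1; subst ha2
      exact Or.inr ⟨a ++ x :: v, by simp, Or.inr (Or.inr ⟨a, v, x, y, rfl, rfl⟩)⟩
    · cases a with
      | nil =>
          simp only [List.nil_append] at ha2
          subst ha1
          cases ha2
          exact Or.inr ⟨x :: v, by simp, Or.inr (Or.inr ⟨[], v, x, y, rfl, rfl⟩)⟩
      | cons z a =>
          simp only [List.cons_append, List.cons.injEq] at ha2
          obtain ⟨rfl, ha2⟩ := ha2
          subst ha1; subst ha2
          exact Or.inl ⟨u ++ x :: a, by simp, Or.inr (Or.inr ⟨u, a, x, y, rfl, rfl⟩)⟩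

section Lev
variable {T : Type*} [DecidableEq T]

@[simp] theorem dc_delete (x : T) :
    (Levenshtein.defaultCost : Levenshtein.Cost T T ℕ).delete x = 1 := rfl

@[simp] theorem dc_insert (x : T) :
    (Levenshtein.defaultCost : Levenshtein.Cost T T ℕ).insert x = 1 := rfl

theorem dc_sub (x y : T) :
    (Levenshtein.defaultCost : Levenshtein.Cost T T ℕ).substitute x y =
      if x = y then 0 else 1 := rfl

@[simp] theorem dc_sub_self (x : T) :
    (Levenshtein.defaultCost : Levenshtein.Cost T T ℕ).substitute x x = 0 := by
  simp [dc_sub]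

theorem lev_self (l : List T) : levenshtein Levenshtein.defaultCost l l = 0 := by
  induction l with
  | nil => simp
  | cons x xs ih => simp [ih, dc_sub]

theorem lev_eq_zero {s t : List T} (h : levenshtein Levenshtein.defaultCost s t = 0) :
    s = t := by
  induction s generalizing t with
  | nil =>
      cases t with
      | nil => rfl
      | cons y ys => simp at h
  | cons x xs ih =>
      cases t with
      | nil => simp at h
      | cons y ys =>
          simp only [levenshtein_cons_cons, dc_delete, dc_insert, dc_sub,
            Nat.min_eq_zero_iff] at h
          rcases h with h | h | h
          · omega
          · omega
          · by_cases hxy : x = y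
            · subst hxy
              simp only [if_pos, Nat.zero_add, reduceIte] at h
              rw [ih h]
            · rw [if_neg hxy] at h
              omega

theorem lev_del (u v : List T) (y : T) :
    levenshtein Levenshtein.defaultCost (u ++ y :: v) (u ++ v) ≤ 1 := by
  induction u with
  | nil =>
      simp only [List.nil_append]
      cases v with
      | nil => simp
      | cons z v' =>
          rw [levenshtein_cons_cons]
          refine le_trans (min_le_left _ _) ?_
          simp [lev_self]
  | cons a u ih =>
      simp only [List.cons_append]
      rw [levenshtein_cons_cons]
      refine le_trans (min_le_right _ _) (le_trans (min_le_right _ _) ?_)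
      simpa [dc_sub] using ih

theorem lev_ins (u v : List T) (y : T) :
    levenshtein Levenshtein.defaultCost (u ++ v) (u ++ y :: v) ≤ 1 := by
  induction u with
  | nil =>
      simp only [List.nil_append]
      cases v with
      | nil => simp
      | cons z v' =>
          rw [levenshtein_cons_cons]
          refine le_trans (min_le_right _ _) (le_trans (min_le_left _ _) ?_)
          simp [lev_self]
  | cons a u ih =>
      simp only [List.cons_append]
      rw [levenshtein_cons_cons]
      refine le_trans (min_le_right _ _) (le_trans (min_le_right _ _) ?_)
      simpa [dc_sub] using ih

theorem lev_sub (u v : List T) (x y : T) :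
    levenshtein Levenshtein.defaultCost (u ++ x :: v) (u ++ y :: v) ≤ 1 := by
  induction u with
  | nil =>
      simp only [List.nil_append]
      rw [levenshtein_cons_cons]
      refine le_trans (min_le_right _ _) (le_trans (min_le_right _ _) ?_)
      simp only [dc_sub, lev_self]
      by_cases h : x = y <;> simp [h]
  | cons a u ih =>
      simp only [List.cons_append]
      rw [levenshtein_cons_cons]
      refine le_trans (min_le_right _ _) (le_trans (min_le_right _ _) ?_)
      simpa [dc_sub] using ih

theorem OneEdit.editDist_le_one {s t : List T} (h : OneEdit s t) : editDist s t ≤ 1 := by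
  rcases h with ⟨u, v, y, rfl, rfl⟩ | ⟨u, v, y, rfl, rfl⟩ | ⟨u, v, x, y, rfl, rfl⟩
  · exact lev_del u v y
  · exact lev_ins u v y
  · exact lev_sub u v x y

theorem lev_le_one_cases {s t : List T}
    (h : levenshtein Levenshtein.defaultCost s t ≤ 1) : s = t ∨ OneEdit s t := by
  induction s generalizing t with
  | nil =>
      cases t with
      | nil => exact Or.inl rfl
      | cons y ys =>
          simp only [levenshtein_nil_cons, dc_insert] at h
          have h0 : levenshtein Levenshtein.defaultCost ([] : List T) ys = 0 := by omega
          have := lev_eq_zero h0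
          subst this
          exact Or.inr (Or.inr (Or.inl ⟨[], [], y, rfl, rfl⟩))
  | cons x xs ih =>
      cases t with
      | nil =>
          simp only [levenshtein_cons_nil, dc_delete] at h
          have h0 : levenshtein Levenshtein.defaultCost xs ([] : List T) = 0 := by omega
          have := lev_eq_zero h0
          subst this
          exact Or.inr (Or.inl ⟨[], [], x, rfl, rfl⟩)
      | cons y ys =>
          rw [levenshtein_cons_cons] at h
          rcases min_le_iff.mp h with h1 | h1
          · simp only [dc_delete] at h1
            have h0 : levenshtein Levenshtein.defaultCost xs (y :: ys) = 0 := by omega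
            have := lev_eq_zero h0
            subst this
            exact Or.inr (Or.inl ⟨[], y :: ys, x, rfl, rfl⟩)
          rcases min_le_iff.mp h1 with h2 | h2
          · simp only [dc_insert] at h2
            have h0 : levenshtein Levenshtein.defaultCost (x :: xs) ys = 0 := by omega
            have := lev_eq_zero h0
            rw [← this]
            exact Or.inr (Or.inr (Or.inl ⟨[], x :: xs, y, rfl, rfl⟩))
          · simp only [dc_sub] at h2
            by_cases hxy : x = y
            · subst hxy
              simp only [if_pos, Nat.zero_add, reduceIte] at h2
              rcases ih h2 with rfl | he
              · exact Or.inl rfl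
              · rcases he with ⟨u, v, z, rfl, rfl⟩ | ⟨u, v, z, rfl, rfl⟩ |
                  ⟨u, v, z, w, rfl, rfl⟩
                · exact Or.inr (Or.inl ⟨x :: u, v, z, rfl, rfl⟩)
                · exact Or.inr (Or.inr (Or.inl ⟨x :: u, v, z, rfl, rfl⟩))
                · exact Or.inr (Or.inr (Or.inr ⟨x :: u, v, z, w, rfl, rfl⟩))
            · rw [if_neg hxy] at h2
              have h0 : levenshtein Levenshtein.defaultCost xs ys = 0 := by omega
              have := lev_eq_zero h0
              subst this
              exact Or.inr (Or.inr (Or.inr ⟨[], xs, x, y, rfl, rfl⟩))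

end Lev

/-! ### Helper inversions -/

theorem map_inr_eq_single_inr {M T : Type*} {s : List T} {x : T}
    (h : (s.map Sum.inr : List (M ⊕ T)) = [Sum.inr x]) : s = [x] := by
  cases s <;> simp_all

theorem map_inr_eq_nil {M T : Type*} {s : List T}
    (h : (s.map Sum.inr : List (M ⊕ T)) = []) : s = [] := by
  cases s <;> simp_all

theorem derives_bin {G : CNF N T} {A B C : N} {s₁ s₂ : List T}
    (hbin : (A, B, C) ∈ G.bin) (h1 : G.Derives B s₁) (h2 : G.Derives C s₂) :
    G.Derives A (s₁ ++ s₂) := by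
  obtain ⟨u1, hu1⟩ := h1
  obtain ⟨u2, hu2⟩ := h2
  refine ⟨0 + (u1 + u2), ?_⟩
  rw [List.map_append]
  exact (ScoredDerives.single (mem_prods_bin hbin)).trans' (hu1.append' hu2)

theorem derives_term {G : CNF N T} {A : N} {a : T} (h : (A, a) ∈ G.term) :
    G.Derives A [a] :=
  ⟨0, ScoredDerives.single (mem_prods_term h)⟩

theorem derives_eps {G : CNF N T} (h : G.eps) : G.Derives G.start [] :=
  ⟨0, ScoredDerives.single (mem_prods_eps h)⟩

/-- Every terminal string derived from the insertion nonterminal `I` is nonempty,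
and costs at least its length. -/
theorem I_bound (G : CNF N T) :
    ∀ n : ℕ, ∀ (s : List T) (c : ℕ),
      DerN G.augProds [Sum.inl (Sum.inr ())] (s.map Sum.inr) c n →
      1 ≤ s.length ∧ s.length ≤ c := by
  intro n
  induction n using Nat.strong_induction_on with
  | _ n ih =>
  intro s c h
  rcases h.start_cases with ⟨hv, _, _⟩ | ⟨l, r, p, c', n', hp, hu, h', hcc, hnn⟩
  · exact absurd hv (by cases s <;> simp)
  · obtain ⟨rfl, hx, rfl⟩ := cons_single_eq hu.symm
    rw [List.nil_append, List.append_nil] at h'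
    have hlhs : p.lhs = Sum.inr () := Sum.inl.inj hx
    rcases mem_aug_cases hp with ⟨q, hq, hpq⟩ | ⟨B, y, hex, hyn, rfl⟩ | ⟨x, rfl⟩ |
      ⟨B, rfl | rfl⟩ | rfl | ⟨B, x2, hBx, rfl⟩
    · rw [← hpq] at hlhs; simp [liftProd] at hlhs
    · simp at hlhs
    · -- insertion rule I → x
      obtain ⟨heq, hc'0, -⟩ := h'.all_inr (by intro z hz; simp at hz; exact ⟨x, hz⟩)
      have hs : s = [x] := map_inr_eq_single_inr heq
      subst hs
      have hps : (⟨Sum.inr (), [Sum.inr x], 1⟩ : ScoredProd (N ⊕ Unit) T).score = 1 := rfl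
      rw [hps] at hcc
      exact ⟨by simp, by simp; omega⟩
    · simp at hlhs
    · simp at hlhs
    · -- I → II
      obtain ⟨v₁, v₂, c₁, c₂, n₁, n₂, hv, hcs, hns, d1, d2⟩ :=
        h'.split [Sum.inl (Sum.inr ())] [Sum.inl (Sum.inr ())] rfl
      obtain ⟨s₁, s₂, rfl, hm1, hm2⟩ := List.map_eq_append_iff.mp hv
      subst hm1; subst hm2
      have h1 := ih n₁ (by omega) s₁ c₁ d1
      have h2 := ih n₂ (by omega) s₂ c₂ d2
      have hps : (⟨Sum.inr (), [Sum.inl (Sum.inr ()), Sum.inl (Sum.inr ())], 0⟩ :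
          ScoredProd (N ⊕ Unit) T).score = 0 := rfl
      rw [hps] at hcc
      exact ⟨by simp; omega, by simp; omega⟩
    · simp at hlhs

/-- Soundness: an augmented derivation of score `c ≤ 1` yields a string of the original
grammar within `c` edits. -/
theorem main_fwd (G : CNF N T) :
    ∀ n : ℕ, ∀ (A : N) (s : List T) (c : ℕ), c ≤ 1 →
      DerN G.augProds [Sum.inl (Sum.inl A)] (s.map Sum.inr) c n →
      ∃ s', G.Derives A s' ∧ ((c = 0 ∧ s' = s) ∨ (c = 1 ∧ OneEdit s s')) := by
  intro n
  induction n using Nat.strong_induction_on with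
  | _ n ih =>
  intro A s c hc h
  rcases h.start_cases with ⟨hv, hc0, -⟩ | ⟨l, r, p, c', n', hp, hu, h', hcc, hnn⟩
  · exact absurd hv (by cases s <;> simp)
  · obtain ⟨rfl, hx, rfl⟩ := cons_single_eq hu.symm
    rw [List.nil_append, List.append_nil] at h'
    have hlhs : p.lhs = Sum.inl A := Sum.inl.inj hx
    rcases mem_aug_cases hp with ⟨q, hq, hpq⟩ | ⟨B, y, hex, hyn, rfl⟩ | ⟨x, rfl⟩ |
      ⟨B, rfl | rfl⟩ | rfl | ⟨B, x2, hBx, rfl⟩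
    · -- lifted production of G
      rcases mem_prods_cases hq with ⟨A0, B, C, hbin, rfl⟩ | ⟨A0, a, hterm, rfl⟩ |
        ⟨heps, rfl⟩
      · -- A → BC
        subst hpq
        simp only [liftProd] at hlhs
        obtain rfl : A = A0 := (Sum.inl.inj hlhs).symm
        obtain ⟨v₁, v₂, c₁, c₂, n₁, n₂, hv, hcs, hns, d1, d2⟩ :=
          h'.split [Sum.inl (Sum.inl B)] [Sum.inl (Sum.inl C)] rfl
        obtain ⟨s₁, s₂, rfl, hm1, hm2⟩ := List.map_eq_append_iff.mp hv
        subst hm1; subst hm2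
        have hps : (liftProd (⟨A, [Sum.inl B, Sum.inl C], 0⟩ : ScoredProd N T)).score
            = 0 := rfl
        rw [hps] at hcc
        obtain ⟨s₁', hD1, hcase1⟩ := ih n₁ (by omega) B s₁ c₁ (by omega) d1
        obtain ⟨s₂', hD2, hcase2⟩ := ih n₂ (by omega) C s₂ c₂ (by omega) d2
        refine ⟨s₁' ++ s₂', derives_bin hbin hD1 hD2, ?_⟩
        rcases hcase1 with ⟨hc1, rfl⟩ | ⟨hc1, he1⟩ <;>
          rcases hcase2 with ⟨hc2, rfl⟩ | ⟨hc2, he2⟩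
        · exact Or.inl ⟨by omega, rfl⟩
        · exact Or.inr ⟨by omega, he2.append_left s₁'⟩
        · exact Or.inr ⟨by omega, he1.append_right s₂'⟩
        · exact absurd hc (by omega)
      · -- A → a
        subst hpq
        simp only [liftProd] at hlhs
        obtain rfl : A = A0 := (Sum.inl.inj hlhs).symm
        obtain ⟨heq, hc'0, -⟩ := h'.all_inr
          (by intro z hz; simp [liftProd] at hz; exact ⟨a, hz⟩)
        simp only [liftProd, List.map_cons, List.map_nil, Sum.map_inr, id_eq] at heq
        have hs : s = [a] := map_inr_eq_single_inr heq
        subst hs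
        have hps : (liftProd (⟨A, [Sum.inr a], 0⟩ : ScoredProd N T)).score = 0 := rfl
        rw [hps] at hcc
        exact ⟨[a], derives_term hterm, Or.inl ⟨by omega, rfl⟩⟩
      · -- S → ε
        subst hpq
        simp only [liftProd] at hlhs
        have hSA : G.start = A := Sum.inl.inj hlhs
        obtain ⟨heq, hc'0, -⟩ := h'.all_inr (by intro z hz; simp [liftProd] at hz)
        simp only [liftProd, List.map_nil] at heq
        have hs : s = [] := map_inr_eq_nil heq
        subst hs
        have hps : (liftProd (⟨G.start, [], 0⟩ : ScoredProd N T)).score = 0 := rfl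
        rw [hps] at hcc
        exact ⟨[], hSA ▸ derives_eps heps, Or.inl ⟨by omega, rfl⟩⟩
    · -- substitution rule A → y
      obtain rfl : A = B := (Sum.inl.inj hlhs).symm
      obtain ⟨heq, hc'0, -⟩ := h'.all_inr (by intro z hz; simp at hz; exact ⟨y, hz⟩)
      have hs : s = [y] := map_inr_eq_single_inr heq
      subst hs
      have hps : (⟨Sum.inl A, [Sum.inr y], 1⟩ : ScoredProd (N ⊕ Unit) T).score = 1 := rfl
      rw [hps] at hcc
      obtain ⟨x0, hx0⟩ := hex
      exact ⟨[x0], derives_term hx0,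
        Or.inr ⟨by omega, Or.inr (Or.inr ⟨[], [], y, x0, rfl, rfl⟩)⟩⟩
    · -- insertion rule (lhs is I): impossible
      simp at hlhs
    · -- A → IA
      obtain rfl : A = B := (Sum.inl.inj hlhs).symm
      obtain ⟨v₁, v₂, c₁, c₂, n₁, n₂, hv, hcs, hns, d1, d2⟩ :=
        h'.split [Sum.inl (Sum.inr ())] [Sum.inl (Sum.inl A)] rfl
      obtain ⟨s₁, s₂, rfl, hm1, hm2⟩ := List.map_eq_append_iff.mp hv
      subst hm1; subst hm2
      have hps : (⟨Sum.inl A, [Sum.inl (Sum.inr ()), Sum.inl (Sum.inl A)], 0⟩ :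
          ScoredProd (N ⊕ Unit) T).score = 0 := rfl
      rw [hps] at hcc
      obtain ⟨hIl, hIu⟩ := I_bound G n₁ s₁ c₁ d1
      obtain ⟨s₂', hD2, hcase⟩ := ih n₂ (by omega) A s₂ c₂ (by omega) d2
      rcases hcase with ⟨hc2, rfl⟩ | ⟨hc2, he⟩
      · obtain ⟨y, rfl⟩ := List.length_eq_one_iff.mp (by omega : s₁.length = 1)
        exact ⟨s₂', hD2, Or.inr ⟨by omega, Or.inl ⟨[], s₂', y, by simp, by simp⟩⟩⟩
      · exact absurd hc (by omega)
    · -- A → AI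
      obtain rfl : A = B := (Sum.inl.inj hlhs).symm
      obtain ⟨v₁, v₂, c₁, c₂, n₁, n₂, hv, hcs, hns, d1, d2⟩ :=
        h'.split [Sum.inl (Sum.inl A)] [Sum.inl (Sum.inr ())] rfl
      obtain ⟨s₁, s₂, rfl, hm1, hm2⟩ := List.map_eq_append_iff.mp hv
      subst hm1; subst hm2
      have hps : (⟨Sum.inl A, [Sum.inl (Sum.inl A), Sum.inl (Sum.inr ())], 0⟩ :
          ScoredProd (N ⊕ Unit) T).score = 0 := rfl
      rw [hps] at hcc
      obtain ⟨hIl, hIu⟩ := I_bound G n₂ s₂ c₂ d2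
      obtain ⟨s₁', hD1, hcase⟩ := ih n₁ (by omega) A s₁ c₁ (by omega) d1
      rcases hcase with ⟨hc1, rfl⟩ | ⟨hc1, he⟩
      · obtain ⟨y, rfl⟩ := List.length_eq_one_iff.mp (by omega : s₂.length = 1)
        exact ⟨s₁', hD1, Or.inr ⟨by omega, Or.inl ⟨s₁', [], y, by simp, by simp⟩⟩⟩
      · exact absurd hc (by omega)
    · -- I → II : impossible lhs
      simp at hlhs
    · -- deletion rule A → ε
      obtain rfl : A = B := (Sum.inl.inj hlhs).symm
      obtain ⟨heq, hc'0, -⟩ := h'.all_inr (by intro z hz; simp at hz)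
      have hs : s = [] := map_inr_eq_nil heq
      subst hs
      have hps : (⟨Sum.inl A, [], 1⟩ : ScoredProd (N ⊕ Unit) T).score = 1 := rfl
      rw [hps] at hcc
      exact ⟨[x2], derives_term hBx,
        Or.inr ⟨by omega, Or.inr (Or.inl ⟨[], [], x2, rfl, rfl⟩)⟩⟩

/-- Completeness: if `A ⇒* s'` in `G` and `s` is one edit away from `s'`,
then `A` derives `s` in `G_e` with score at most `1`. -/
theorem main_bwd (G : CNF N T) :
    ∀ n : ℕ, ∀ (A : N) (s' s : List T) (c : ℕ),
      DerN G.prods [Sum.inl A] (s'.map Sum.inr) c n → OneEdit s s' →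
      ∃ u ≤ 1, ScoredDerives G.augProds [Sum.inl (Sum.inl A)] (s.map Sum.inr) u := by
  intro n
  induction n using Nat.strong_induction_on with
  | _ n ih =>
  intro A s' s c h hedit
  rcases h.start_cases with ⟨hv, -, -⟩ | ⟨l, r, p, c', n', hp, hu, h', hcc, hnn⟩
  · exact absurd hv (by cases s' <;> simp)
  · obtain ⟨rfl, hx, rfl⟩ := cons_single_eq hu.symm
    rw [List.nil_append, List.append_nil] at h'
    have hlhs : p.lhs = A := Sum.inl.inj hx
    rcases mem_prods_cases hp with ⟨A0, B, C, hbin, rfl⟩ | ⟨A0, a, hterm, rfl⟩ |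
      ⟨heps, rfl⟩
    · -- A → BC
      obtain rfl : A = A0 := hlhs.symm
      obtain ⟨v₁, v₂, c₁, c₂, n₁, n₂, hv, hcs, hns, d1, d2⟩ :=
        h'.split [Sum.inl B] [Sum.inl C] rfl
      obtain ⟨t₁, t₂, rfl, hm1, hm2⟩ := List.map_eq_append_iff.mp hv
      subst hm1; subst hm2
      have hstep : ScoredDerives G.augProds [Sum.inl (Sum.inl A)]
          ([Sum.inl (Sum.inl B)] ++ [Sum.inl (Sum.inl C)]) 0 := by
        have := ScoredDerives.single (mem_aug_lift (mem_prods_bin (G := G) hbin))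
        simpa [liftProd] using this
      rcases hedit.split with ⟨w₁, rfl, he1⟩ | ⟨w₂, rfl, he2⟩
      · obtain ⟨u, hu1, hD⟩ := ih n₁ (by omega) B t₁ w₁ c₁ d1 he1
        have hC : ScoredDerives G.augProds [Sum.inl (Sum.inl C)] (t₂.map Sum.inr) 0 :=
          derives_to_aug_zero ⟨c₂, scoredDerives_iff_derN.mpr ⟨n₂, d2⟩⟩
        refine ⟨0 + (u + 0), by omega, ?_⟩
        rw [List.map_append]
        exact hstep.trans' (hD.append' hC)
      · obtain ⟨u, hu1, hD⟩ := ih n₂ (by omega) C t₂ w₂ c₂ d2 he2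
        have hB : ScoredDerives G.augProds [Sum.inl (Sum.inl B)] (t₁.map Sum.inr) 0 :=
          derives_to_aug_zero ⟨c₁, scoredDerives_iff_derN.mpr ⟨n₁, d1⟩⟩
        refine ⟨0 + (0 + u), by omega, ?_⟩
        rw [List.map_append]
        exact hstep.trans' (hB.append' hD)
    · -- A → a
      obtain rfl : A = A0 := hlhs.symm
      obtain ⟨heq, -, -⟩ := h'.all_inr (by intro z hz; simp at hz; exact ⟨a, hz⟩)
      have hs' : s' = [a] := map_inr_eq_single_inr heq
      subst hs'
      have st2 : ScoredDerives G.augProds [Sum.inl (Sum.inl A)] [Sum.inr a] 0 := by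
        simpa [liftProd] using
          ScoredDerives.single (mem_aug_lift (mem_prods_term (G := G) hterm))
      rcases hedit with ⟨u, v, y, rfl, huv⟩ | ⟨u, v, y, rfl, huv⟩ |
        ⟨u, v, x, y, rfl, huv⟩
      · -- s = u ++ y :: v with [a] = u ++ v
        cases u with
        | nil =>
            simp only [List.nil_append] at huv
            subst huv
            -- s = y :: [a] : use A ⇒ IA
            have st1 : ScoredDerives G.augProds [Sum.inl (Sum.inl A)]
                ([Sum.inl (Sum.inr ())] ++ [Sum.inl (Sum.inl A)]) 0 :=
              ScoredDerives.single (mem_aug_IA (G := G) A)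
            have st3 : ScoredDerives G.augProds [Sum.inl (Sum.inr ())] [Sum.inr y] 1 :=
              ScoredDerives.single (mem_aug_ins (G := G) y)
            refine ⟨0 + (1 + 0), by omega, ?_⟩
            have := st1.trans' (st3.append' st2)
            simpa using this
        | cons z u' =>
            simp only [List.cons_append, List.cons.injEq] at huv
            obtain ⟨rfl, h2⟩ := huv
            obtain ⟨rfl, rfl⟩ : u' = [] ∧ v = [] := List.append_eq_nil_iff.mp h2.symm
            -- s = [a, y] : use A ⇒ AI
            have st1 : ScoredDerives G.augProds [Sum.inl (Sum.inl A)]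
                ([Sum.inl (Sum.inl A)] ++ [Sum.inl (Sum.inr ())]) 0 :=
              ScoredDerives.single (mem_aug_AI (G := G) A)
            have st3 : ScoredDerives G.augProds [Sum.inl (Sum.inr ())] [Sum.inr y] 1 :=
              ScoredDerives.single (mem_aug_ins (G := G) y)
            refine ⟨0 + (0 + 1), by omega, ?_⟩
            have := st1.trans' (st2.append' st3)
            simpa using this
      · -- s = u ++ v with [a] = u ++ y :: v : so s = []
        cases u with
        | nil =>
            simp only [List.nil_append, List.cons.injEq] at huv
            obtain ⟨rfl, rfl⟩ := huv
            refine ⟨1, le_rfl, ?_⟩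
            exact ScoredDerives.single (mem_aug_del (G := G) hterm)
        | cons z u' =>
            simp only [List.cons_append, List.cons.injEq] at huv
            obtain ⟨-, h2⟩ := huv
            exact absurd h2 (by simp)
      · -- s = u ++ x :: v with [a] = u ++ y :: v
        cases u with
        | nil =>
            simp only [List.nil_append, List.cons.injEq] at huv
            obtain ⟨rfl, rfl⟩ := huv
            by_cases hmem : (A, x) ∈ G.term
            · refine ⟨0, by omega, ?_⟩
              simpa [liftProd] using
                ScoredDerives.single (mem_aug_lift (mem_prods_term (G := G) hmem))
            · refine ⟨1, le_rfl, ?_⟩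
              exact ScoredDerives.single (mem_aug_sub (G := G) ⟨a, hterm⟩ hmem)
        | cons z u' =>
            simp only [List.cons_append, List.cons.injEq] at huv
            obtain ⟨-, h2⟩ := huv
            exact absurd h2 (by simp)
    · -- S → ε
      obtain rfl : A = G.start := hlhs.symm
      obtain ⟨heq, -, -⟩ := h'.all_inr (by intro z hz; simp at hz)
      have hs' : s' = [] := map_inr_eq_nil heq
      subst hs'
      rcases hedit with ⟨u, v, y, rfl, huv⟩ | ⟨u, v, y, rfl, huv⟩ |
        ⟨u, v, x, y, rfl, huv⟩
      · obtain ⟨rfl, rfl⟩ : u = [] ∧ v = [] := List.append_eq_nil_iff.mp huv.symm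
        -- s = [y] : A ⇒ AI ⇒ I ⇒ y
        have st1 : ScoredDerives G.augProds [Sum.inl (Sum.inl G.start)]
            ([Sum.inl (Sum.inl G.start)] ++ [Sum.inl (Sum.inr ())]) 0 :=
          ScoredDerives.single (mem_aug_AI (G := G) G.start)
        have st2 : ScoredDerives G.augProds [Sum.inl (Sum.inl G.start)]
            ([] : List ((N ⊕ Unit) ⊕ T)) 0 := by
          simpa [liftProd] using
            ScoredDerives.single (mem_aug_lift (mem_prods_eps (G := G) heps))
        have st3 : ScoredDerives G.augProds [Sum.inl (Sum.inr ())] [Sum.inr y] 1 :=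
          ScoredDerives.single (mem_aug_ins (G := G) y)
        refine ⟨0 + (0 + 1), by omega, ?_⟩
        have := st1.trans' (st2.append' st3)
        simpa using this
      · exact absurd huv.symm (by simp)
      · exact absurd huv.symm (by simp)

end EditAux

/-- For every string `s ∈ Σ*` and every nonterminal `A` of `G`, the minimum
score of a derivation `A ⇒* s` in the augmented grammar `G_e` equals `1` (i.e. there is a
derivation of score `1` and none of score `0`) if and only if
`min { d_ed(s, s') : s' ∈ Σ*, A ⇒* s' in G } = 1`. -/
theorem augGrammar_min_score_one_iff {N T : Type*} [DecidableEq T]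
    (G : CNF N T) (hne : G.lang.Nonempty) (s : List T) (A : N) :
    (G.augDerives (Sum.inl A) s 1 ∧ ¬ G.augDerives (Sum.inl A) s 0) ↔
      sInf {d | ∃ s', G.Derives A s' ∧ editDist s s' = d} = 1 := by
  constructor
  · rintro ⟨h1, h0⟩
    obtain ⟨n, hn⟩ := scoredDerives_iff_derN.mp h1
    obtain ⟨s', hD, hcase⟩ := main_fwd G n A s 1 le_rfl hn
    rcases hcase with ⟨h10, -⟩ | ⟨-, hedit⟩
    · omega
    · have hle : editDist s s' ≤ 1 := hedit.editDist_le_one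
      have hne0 : editDist s s' ≠ 0 := by
        intro hz
        have hss : s = s' := lev_eq_zero hz
        exact h0 (derives_to_aug_zero (hss ▸ hD))
      have h1S : (1 : ℕ) ∈ {d | ∃ s', G.Derives A s' ∧ editDist s s' = d} :=
        ⟨s', hD, by omega⟩
      have h0S : (0 : ℕ) ∉ {d | ∃ s', G.Derives A s' ∧ editDist s s' = d} := by
        rintro ⟨z, hz, hz0⟩
        have hss : s = z := lev_eq_zero hz0
        exact h0 (derives_to_aug_zero (hss ▸ hz))
      have hub := Nat.sInf_le h1S
      have hnz : sInf {d | ∃ s', G.Derives A s' ∧ editDist s s' = d} ≠ 0 := by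
        intro hz
        rcases Nat.sInf_eq_zero.mp hz with h | h
        · exact h0S h
        · rw [h] at h1S; exact h1S
      omega
  · intro hInf
    have hSne : {d | ∃ s', G.Derives A s' ∧ editDist s s' = d}.Nonempty := by
      by_contra hcon
      rw [Set.not_nonempty_iff_eq_empty] at hcon
      rw [hcon, Nat.sInf_empty] at hInf
      omega
    have h1S := Nat.sInf_mem hSne
    rw [hInf] at h1S
    obtain ⟨s', hD, hlev⟩ := h1S
    have h0S : (0 : ℕ) ∉ {d | ∃ s', G.Derives A s' ∧ editDist s s' = d} := by
      intro h
      have := Nat.sInf_le h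
      omega
    have hedit : OneEdit s s' := by
      rcases lev_le_one_cases (le_of_eq hlev) with hss | he
      · exfalso
        apply h0S
        exact ⟨s, hss ▸ hD, lev_self s⟩
      · exact he
    obtain ⟨uD, huD⟩ := hD
    obtain ⟨nD, hnD⟩ := scoredDerives_iff_derN.mp huD
    obtain ⟨u, hu1, hDer⟩ := main_bwd G nD A s' s uD hnD hedit
    constructor
    · have hu0 : u ≠ 0 := by
        intro hz
        subst hz
        exact h0S ⟨s, aug_zero_to_derives hDer, lev_self s⟩
      have hu : u = 1 := by omega
      rw [hu] at hDer
      exact hDer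
    · intro h0
      exact h0S ⟨s, aug_zero_to_derives h0, lev_self s⟩
end

section
/- Under the rounded binary-tree process, for every node v of T, Var(X_v) ≤ Σ_{l ∈ L(v)} Var(X_l) + δ · Σ_{g,h ∈ L(v), g < h} score(g)·score(h), where the second sum ranges over unordered pairs of distinct leaves of the subtree rooted at v. -/
open MeasureTheory ProbabilityTheory
open scoped ENNReal

/-- `⌊log_{1+δ} y⌋` as a natural number (for `y ≥ 1` the logarithm is nonnegative). -/
noncomputable def rExp (δ y : ℝ) : ℕ := ⌊Real.logb (1 + δ) y⌋₊

/-- `⌊y⌋_δ = (1+δ)^{⌊log_{1+δ} y⌋}`. -/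
noncomputable def rfloor (δ y : ℝ) : ℝ := (1 + δ) ^ rExp δ y

/-- `⌈y⌉_δ = (1+δ)^{⌈log_{1+δ} y⌉}`. -/
noncomputable def rceil (δ y : ℝ) : ℝ := (1 + δ) ^ (⌈Real.logb (1 + δ) y⌉₊)

/-- The probability `k / (δ(1+δ)^r)` (where `y = (1+δ)^r + k`) that the randomized
rounding rounds up. -/
noncomputable def roundUpProb (δ y : ℝ) : ℝ≥0∞ :=
  ENNReal.ofReal ((y - rfloor δ y) / (δ * rfloor δ y))

/-- The randomized rounding `Round_δ(y)`: equal to `(1+δ)^r` with probability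
`(δ(1+δ)^r − k)/(δ(1+δ)^r)` and to `(1+δ)^{r+1}` with probability `k/(δ(1+δ)^r)`,
where `y = (1+δ)^r + k`, `r = ⌊log_{1+δ} y⌋` and `k ∈ [0, δ(1+δ)^r)`.
(For `δ > 0` and `y ≥ 1` the probability `k/(δ(1+δ)^r)` lies in `[0,1)`, so the
clamping `min · 1` below is vacuous.) -/
noncomputable def roundPMF (δ y : ℝ) : PMF ℝ :=
  (PMF.bernoulli (min (roundUpProb δ y) 1).toNNReal
    (by simpa using ENNReal.toNNReal_mono ENNReal.one_ne_top (min_le_right (roundUpProb δ y) 1))).map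
    (fun b => if b then (1 + δ) ^ (rExp δ y + 1) else rfloor δ y)

/-- Expectation of a real-valued probability mass function. -/
noncomputable def pmfExp (p : PMF ℝ) : ℝ := ∫ x, x ∂p.toMeasure

/-- Variance of a real-valued probability mass function. -/
noncomputable def pmfVar (p : PMF ℝ) : ℝ := variance (fun x => x) p.toMeasure

/-- A finite rooted binary tree in which every internal node has exactly two children and
every leaf carries a real score. -/
inductive BTree where
  | leaf (score : ℝ)
  | node (l r : BTree)

/-- The list of scores of the leaves of (the subtree rooted at) `t`. -/
def BTree.leafScores : BTree → List ℝ
  | .leaf y => [y]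
  | .node l r => l.leafScores ++ r.leafScores

/-- The distribution of the random variable `X_v` of the rounded binary-tree process at
the root of `t`: at a leaf, `X_l = Round_δ(score(l))`, independently across leaves; at an
internal node `v` with children `v1, v2`, conditioned on `X_{v1}` and `X_{v2}`,
`X_v = Round_δ(X_{v1} + X_{v2})`. -/
noncomputable def treePMF (δ : ℝ) : BTree → PMF ℝ
  | .leaf y => roundPMF δ y
  | .node l r => (treePMF δ l).bind fun x => (treePMF δ r).bind fun y => roundPMF δ (x + y)

/-- `Σ_{g < h} L_g · L_h`, the sum over unordered pairs of distinct positions of a list. -/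
noncomputable def pairSum (L : List ℝ) : ℝ :=
  ∑ p ∈ (Finset.range L.length ×ˢ Finset.range L.length).filter (fun p => p.1 < p.2),
    L.getD p.1 0 * L.getD p.2 0


/-! ### Auxiliary lemmas -/

lemma BP.one_le_rfloor {δ y : ℝ} (hδ : 0 < δ) : 1 ≤ rfloor δ y :=
  one_le_pow₀ (by linarith : (1:ℝ) ≤ 1 + δ)

lemma BP.rfloor_le {δ y : ℝ} (hδ : 0 < δ) (hy : 1 ≤ y) : rfloor δ y ≤ y := by
  have hb : (1:ℝ) < 1 + δ := by linarith
  have hy0 : (0:ℝ) < y := by linarith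
  have hlog : 0 ≤ Real.logb (1 + δ) y := Real.logb_nonneg hb hy
  have h1 : ((rExp δ y : ℕ) : ℝ) ≤ Real.logb (1 + δ) y := Nat.floor_le hlog
  calc rfloor δ y = (1 + δ) ^ ((rExp δ y : ℕ) : ℝ) := (Real.rpow_natCast _ _).symm
    _ ≤ (1 + δ) ^ (Real.logb (1 + δ) y) := Real.rpow_le_rpow_of_exponent_le hb.le h1
    _ = y := Real.rpow_logb (by linarith) hb.ne' hy0

lemma BP.lt_rfloor_mul {δ y : ℝ} (hδ : 0 < δ) (hy : 1 ≤ y) : y < (1 + δ) * rfloor δ y := by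
  have hb : (1:ℝ) < 1 + δ := by linarith
  have hy0 : (0:ℝ) < y := by linarith
  have h1 : Real.logb (1 + δ) y < (rExp δ y : ℝ) + 1 := Nat.lt_floor_add_one _
  calc y = (1 + δ) ^ (Real.logb (1 + δ) y) := (Real.rpow_logb (by linarith) hb.ne' hy0).symm
    _ < (1 + δ) ^ (((rExp δ y + 1 : ℕ)) : ℝ) := by
        apply Real.rpow_lt_rpow_of_exponent_lt hb
        push_cast; linarith
    _ = (1 + δ) ^ (rExp δ y + 1) := Real.rpow_natCast _ _
    _ = (1 + δ) * rfloor δ y := by rw [rfloor, pow_succ]; ring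

lemma BP.pow_le_rfloor {δ y : ℝ} (hδ : 0 < δ) {j : ℕ} (hj : (1 + δ) ^ j ≤ y) :
    (1 + δ) ^ j ≤ rfloor δ y := by
  have hb : (1:ℝ) < 1 + δ := by linarith
  have hp0 : (0:ℝ) < (1 + δ) ^ j := by positivity
  have h1 : (j : ℝ) ≤ Real.logb (1 + δ) y := by
    have h2 := Real.logb_le_logb_of_le hb hp0 hj
    rwa [← Real.rpow_natCast (1 + δ) j, Real.logb_rpow (by linarith) hb.ne'] at h2
  exact pow_le_pow_right₀ hb.le (Nat.le_floor h1)

lemma BP.key_ineq {δ x1 x2 f : ℝ} (hδ : 0 < δ) (h1 : 1 ≤ x1) (h2 : 1 ≤ x2)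
    (hf1 : x1 ≤ f) (hf2 : x2 ≤ f) (hfs : f ≤ x1 + x2) :
    (x1 + x2 - f) * (δ * f - (x1 + x2 - f)) ≤ δ * (x1 * x2) := by
  nlinarith [sq_nonneg (x1 + x2 - f),
    mul_nonneg (mul_nonneg hδ.le (by linarith : (0:ℝ) ≤ f - x2)) (by linarith : (0:ℝ) ≤ f - x1)]

lemma BP.tsum_bind_mul {α β : Type*} (p : PMF α) (g : α → PMF β) (F : β → ℝ≥0∞) :
    ∑' z, (p.bind g) z * F z = ∑' a, p a * ∑' z, g a z * F z := by
  simp only [PMF.bind_apply]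
  calc ∑' z, (∑' a, p a * g a z) * F z = ∑' z, ∑' a, p a * g a z * F z := by
        congr 1; funext z; exact ENNReal.tsum_mul_right.symm
    _ = ∑' a, ∑' z, p a * g a z * F z := ENNReal.tsum_comm
    _ = ∑' a, p a * ∑' z, g a z * F z := by
        congr 1; funext a
        simp_rw [mul_assoc]
        exact ENNReal.tsum_mul_left

lemma BP.tsum_pure_mul {β : Type*} (a : β) (F : β → ℝ≥0∞) :
    ∑' z, (PMF.pure a) z * F z = F a := by
  rw [tsum_eq_single a]
  · simp [PMF.pure_apply]
  · intro b hb; simp [PMF.pure_apply, hb]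

lemma BP.tsum_map_mul {α β : Type*} (p : PMF α) (g : α → β) (F : β → ℝ≥0∞) :
    ∑' z, (p.map g) z * F z = ∑' a, p a * F (g a) := by
  rw [PMF.map, BP.tsum_bind_mul]
  congr 1; funext a; simp only [Function.comp_apply]; rw [BP.tsum_pure_mul]

lemma BP.tsum_congr_support {α : Type*} (p : PMF α) {F G : α → ℝ≥0∞}
    (h : ∀ x ∈ p.support, F x = G x) : ∑' z, p z * F z = ∑' z, p z * G z := by
  apply tsum_congr; intro x
  by_cases hx : x ∈ p.support
  · rw [h x hx]
  · have : p x = 0 := by simpa [PMF.mem_support_iff, not_not] using hx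
    simp [this]

lemma BP.tsum_mono_support {α : Type*} (p : PMF α) {F G : α → ℝ≥0∞}
    (h : ∀ x ∈ p.support, F x ≤ G x) : ∑' z, p z * F z ≤ ∑' z, p z * G z := by
  apply ENNReal.tsum_le_tsum; intro x
  by_cases hx : x ∈ p.support
  · exact mul_le_mul_right (h x hx) _
  · have : p x = 0 := by simpa [PMF.mem_support_iff, not_not] using hx
    simp [this]

lemma BP.tsum_const_one {α : Type*} (p : PMF α) (c : ℝ≥0∞) : ∑' z, p z * c = c := by
  rw [ENNReal.tsum_mul_right, PMF.tsum_coe, one_mul]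

/-- the variance of the rounding of `y` -/
noncomputable def vR (δ y : ℝ) : ℝ :=
  (y - rfloor δ y) * (δ * rfloor δ y - (y - rfloor δ y))

section round
variable {δ y : ℝ}

lemma BP.pr_nonneg (hδ : 0 < δ) (hy : 1 ≤ y) :
    0 ≤ (y - rfloor δ y) / (δ * rfloor δ y) := by
  apply div_nonneg (by linarith [BP.rfloor_le hδ hy])
  have := BP.one_le_rfloor (y := y) hδ; positivity

lemma BP.pr_lt_one (hδ : 0 < δ) (hy : 1 ≤ y) :
    (y - rfloor δ y) / (δ * rfloor δ y) < 1 := by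
  have hf := BP.one_le_rfloor (y := y) hδ
  rw [div_lt_one (by positivity)]
  have := BP.lt_rfloor_mul hδ hy; nlinarith

lemma BP.vR_nonneg (hδ : 0 < δ) (hy : 1 ≤ y) : 0 ≤ vR δ y := by
  have h1 := BP.rfloor_le hδ hy
  have h2 := BP.lt_rfloor_mul hδ hy
  have hf := BP.one_le_rfloor (y := y) hδ
  apply mul_nonneg (by linarith); nlinarith

lemma BP.roundPMF_tsum (hδ : 0 < δ) (hy : 1 ≤ y) (G : ℝ → ℝ)
    (hGf : 0 ≤ G (rfloor δ y)) (hGhi : 0 ≤ G ((1 + δ) ^ (rExp δ y + 1))) :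
    ∑' z, roundPMF δ y z * ENNReal.ofReal (G z) =
      ENNReal.ofReal ((1 - (y - rfloor δ y) / (δ * rfloor δ y)) * G (rfloor δ y)
        + ((y - rfloor δ y) / (δ * rfloor δ y)) * G ((1 + δ) ^ (rExp δ y + 1))) := by
  set pr := (y - rfloor δ y) / (δ * rfloor δ y) with hpr
  have h0 : 0 ≤ pr := BP.pr_nonneg hδ hy
  have h1 : pr < 1 := BP.pr_lt_one hδ hy
  have hmin : min (roundUpProb δ y) 1 = ENNReal.ofReal pr := by
    rw [roundUpProb, min_eq_left (ENNReal.ofReal_le_one.mpr h1.le)]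
  rw [roundPMF, BP.tsum_map_mul, tsum_bool]
  simp only [PMF.bernoulli_apply, Bool.cond_false, Bool.cond_true, hmin, reduceIte,
    Bool.false_eq_true, if_false]
  rw [ENNReal.coe_sub, ENNReal.coe_toNNReal ENNReal.ofReal_ne_top, ENNReal.coe_one]
  rw [← ENNReal.ofReal_one, ← ENNReal.ofReal_sub _ h0,
    ← ENNReal.ofReal_mul (by linarith), ← ENNReal.ofReal_mul h0,
    ← ENNReal.ofReal_add (by nlinarith) (by nlinarith)]

lemma BP.roundPMF_mean (hδ : 0 < δ) (hy : 1 ≤ y) :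
    ∑' z, roundPMF δ y z * ENNReal.ofReal z = ENNReal.ofReal y := by
  rw [BP.roundPMF_tsum hδ hy (fun z => z) (by linarith [BP.one_le_rfloor (y := y) hδ])
    (by positivity)]
  congr 1
  have hf := BP.one_le_rfloor (y := y) hδ
  have hfy := BP.rfloor_le hδ hy
  have hd : δ * rfloor δ y ≠ 0 := by positivity
  have hhi : (1 + δ) ^ (rExp δ y + 1) = (1 + δ) * rfloor δ y := by
    rw [rfloor, pow_succ]; ring
  rw [hhi]; field_simp; ring

lemma BP.roundPMF_m2 (hδ : 0 < δ) (hy : 1 ≤ y) :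
    ∑' z, roundPMF δ y z * (ENNReal.ofReal (z ^ 2)) = ENNReal.ofReal (y ^ 2 + vR δ y) := by
  rw [BP.roundPMF_tsum hδ hy (fun z => z ^ 2) (by positivity) (by positivity)]
  congr 1
  have hf := BP.one_le_rfloor (y := y) hδ
  have hfy := BP.rfloor_le hδ hy
  have hd : δ * rfloor δ y ≠ 0 := by positivity
  have hhi : (1 + δ) ^ (rExp δ y + 1) = (1 + δ) * rfloor δ y := by
    rw [rfloor, pow_succ]; ring
  rw [hhi, vR]; field_simp; ring

lemma BP.roundPMF_support :
    (roundPMF δ y).support ⊆ {rfloor δ y, (1 + δ) ^ (rExp δ y + 1)} := by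
  rw [roundPMF, PMF.support_map]
  rintro z ⟨b, -, rfl⟩
  cases b
  · exact Or.inl rfl
  · exact Or.inr rfl
end round

section bridge
variable (p : PMF ℝ) (s : Finset ℝ)

lemma BP.pmf_ae_mem (hs : p.support ⊆ ↑s) : ∀ᵐ x ∂p.toMeasure, x ∈ (↑s : Set ℝ) := by
  rw [ae_iff]
  have : {x : ℝ | ¬ x ∈ (↑s : Set ℝ)} = (↑s : Set ℝ)ᶜ := rfl
  rw [this]
  exact (PMF.toMeasure_apply_eq_zero_iff (p := p) s.measurableSet.compl).mpr
    (disjoint_compl_right.mono_left hs)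

lemma BP.pmf_integrable (hs : p.support ⊆ ↑s) (f : ℝ → ℝ) : Integrable f p.toMeasure := by
  have key : Integrable (Set.indicator (↑s : Set ℝ) f) p.toMeasure := by
    have heq : Set.indicator (↑s : Set ℝ) f =
        fun y => ∑ x ∈ s, Set.indicator ({x} : Set ℝ) (fun _ => f x) y := by
      funext y
      by_cases hy : y ∈ s
      · rw [Set.indicator_of_mem (by exact_mod_cast hy)]
        rw [Finset.sum_eq_single y]
        · simp
        · intro b _ hb; simp [Set.indicator_of_notMem, Ne.symm hb]
        · intro h; exact absurd hy h
      · rw [Set.indicator_of_notMem (by exact_mod_cast hy)]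
        rw [Finset.sum_eq_zero]
        intro b hb
        have : y ≠ b := fun h => hy (h ▸ hb)
        simp [Set.indicator_of_notMem, this]
    rw [heq]
    apply integrable_finset_sum
    intro x _
    exact (integrable_const (f x)).indicator (measurableSet_singleton x)
  exact key.congr ((BP.pmf_ae_mem p s hs).mono fun x hx => Set.indicator_of_mem hx f)

lemma BP.pmf_memℒp (hs : p.support ⊆ ↑s) : MemLp (fun x : ℝ => x) 2 p.toMeasure := by
  apply MemLp.of_bound measurable_id.aestronglyMeasurable (∑ x ∈ s, |x|)
  filter_upwards [BP.pmf_ae_mem p s hs] with x hx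
  calc ‖x‖ = |x| := rfl
    _ ≤ ∑ x ∈ s, |x| := Finset.single_le_sum (fun i _ => abs_nonneg i) (by exact_mod_cast hx)

lemma BP.pmf_tsum_toReal (hs : p.support ⊆ ↑s) (G : ℝ → ℝ) (hG : ∀ x ∈ s, 0 ≤ G x) :
    (∑' z, p z * ENNReal.ofReal (G z)).toReal = ∑ x ∈ s, (p x).toReal * G x := by
  rw [tsum_eq_sum (s := s) (fun x hx => by
    have : p x = 0 := by
      by_contra h
      exact hx (by exact_mod_cast hs (PMF.mem_support_iff p x |>.mpr h))
    simp [this])]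
  rw [ENNReal.toReal_sum
    (fun x _ => ENNReal.mul_ne_top (PMF.apply_ne_top p x) ENNReal.ofReal_ne_top)]
  exact Finset.sum_congr rfl fun x hx => by
    rw [ENNReal.toReal_mul, ENNReal.toReal_ofReal (hG x hx)]

lemma BP.pmf_integral_eq (hs : p.support ⊆ ↑s) (f : ℝ → ℝ) :
    ∫ x, f x ∂p.toMeasure = ∑ x ∈ s, (p x).toReal * f x := by
  rw [PMF.integral_eq_tsum p f (BP.pmf_integrable p s hs f)]
  rw [tsum_eq_sum (s := s) (fun x hx => by
    have : p x = 0 := by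
      by_contra h
      exact hx (by exact_mod_cast hs (PMF.mem_support_iff p x |>.mpr h))
    simp [this])]
  exact Finset.sum_congr rfl fun x _ => smul_eq_mul _ _

lemma BP.pmfVar_eq (hs : p.support ⊆ ↑s) (hnn : ∀ x ∈ s, 0 ≤ x) :
    pmfVar p = (∑' z, p z * ENNReal.ofReal (z ^ 2)).toReal -
      ((∑' z, p z * ENNReal.ofReal z).toReal) ^ 2 := by
  rw [pmfVar, variance_eq_sub (BP.pmf_memℒp p s hs)]
  have h2 : (∫ x, ((fun x : ℝ => x) ^ 2) x ∂p.toMeasure) = ∫ x, x ^ 2 ∂p.toMeasure := by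
    apply integral_congr_ae; filter_upwards with x; simp
  rw [h2, BP.pmf_integral_eq p s hs (fun x => x ^ 2), BP.pmf_integral_eq p s hs (fun x => x),
    BP.pmf_tsum_toReal p s hs (fun z => z ^ 2) (fun x _ => sq_nonneg x),
    BP.pmf_tsum_toReal p s hs (fun z => z) hnn]
end bridge

lemma BP.list_sum_getD (L : List ℝ) : L.sum = ∑ i ∈ Finset.range L.length, L.getD i 0 := by
  induction L with
  | nil => simp
  | cons a L ih =>
    rw [List.sum_cons, List.length_cons, Finset.sum_range_succ', ih]
    simp [List.getD_cons_succ, List.getD_cons_zero, add_comm]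

lemma BP.pairSum_eq (L : List ℝ) : pairSum L =
    ∑ i ∈ Finset.range L.length, ∑ j ∈ Finset.range L.length,
      if i < j then L.getD i 0 * L.getD j 0 else 0 := by
  rw [pairSum, Finset.sum_filter, Finset.sum_product]

lemma BP.pairSum_cons (a : ℝ) (L : List ℝ) : pairSum (a :: L) = a * L.sum + pairSum L := by
  rw [BP.pairSum_eq, BP.pairSum_eq, List.length_cons, Finset.sum_range_succ']
  have h1 : ∀ i ∈ Finset.range L.length,
      (∑ j ∈ Finset.range (L.length + 1),
        if i + 1 < j then (a :: L).getD (i+1) 0 * (a :: L).getD j 0 else 0) =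
      ∑ j ∈ Finset.range L.length, if i < j then L.getD i 0 * L.getD j 0 else 0 := by
    intro i _
    rw [Finset.sum_range_succ']
    simp [List.getD_cons_succ, Nat.succ_lt_succ_iff]
  rw [Finset.sum_congr rfl h1]
  have h2 : (∑ j ∈ Finset.range (L.length + 1),
      if 0 < j then (a :: L).getD 0 0 * (a :: L).getD j 0 else 0) = a * L.sum := by
    rw [Finset.sum_range_succ']
    simp [List.getD_cons_succ, List.getD_cons_zero, Finset.mul_sum, BP.list_sum_getD]
  rw [h2]; ring

lemma BP.pairSum_nil : pairSum [] = 0 := by simp [pairSum]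

lemma BP.pairSum_append (L1 L2 : List ℝ) :
    pairSum (L1 ++ L2) = pairSum L1 + pairSum L2 + L1.sum * L2.sum := by
  induction L1 with
  | nil => simp [BP.pairSum_nil]
  | cons a L ih =>
    rw [List.cons_append, BP.pairSum_cons, ih, BP.pairSum_cons, List.sum_append, List.sum_cons]
    ring

lemma BP.pairSum_singleton (y : ℝ) : pairSum [y] = 0 := by
  rw [show [y] = y :: ([] : List ℝ) from rfl, BP.pairSum_cons, BP.pairSum_nil]; simp

/-! ### The main induction -/

def PowSet (δ : ℝ) : Set ℝ := {x | ∃ n : ℕ, x = (1 + δ) ^ n}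

lemma BP.mem_pow_one_le {δ x : ℝ} (hδ : 0 < δ) (h : x ∈ PowSet δ) : 1 ≤ x := by
  obtain ⟨n, rfl⟩ := h
  exact one_le_pow₀ (by linarith : (1:ℝ) ≤ 1 + δ)

lemma BP.vR_le_cross {δ x y : ℝ} (hδ : 0 < δ) (hx : x ∈ PowSet δ) (hy : y ∈ PowSet δ) :
    vR δ (x + y) ≤ δ * (x * y) := by
  have hx1 : 1 ≤ x := BP.mem_pow_one_le hδ hx
  have hy1 : 1 ≤ y := BP.mem_pow_one_le hδ hy
  obtain ⟨n, rfl⟩ := hx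
  obtain ⟨m, rfl⟩ := hy
  have hfx : (1 + δ) ^ n ≤ rfloor δ ((1 + δ) ^ n + (1 + δ) ^ m) :=
    BP.pow_le_rfloor hδ (by linarith)
  have hfy : (1 + δ) ^ m ≤ rfloor δ ((1 + δ) ^ n + (1 + δ) ^ m) :=
    BP.pow_le_rfloor hδ (by linarith)
  have hfs : rfloor δ ((1 + δ) ^ n + (1 + δ) ^ m) ≤ (1 + δ) ^ n + (1 + δ) ^ m :=
    BP.rfloor_le hδ (by linarith)
  exact BP.key_ineq hδ hx1 hy1 hfx hfy hfs

lemma BP.roundPMF_support_pow {δ y : ℝ} : (roundPMF δ y).support ⊆ PowSet δ := by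
  intro z hz
  rcases BP.roundPMF_support hz with h | h
  · exact ⟨rExp δ y, h⟩
  · exact ⟨rExp δ y + 1, h⟩

lemma BP.roundPMF_support_finite {δ y : ℝ} : (roundPMF δ y).support.Finite :=
  Set.Finite.subset ((Set.finite_singleton _).insert _) BP.roundPMF_support

lemma BP.tsum_shift {δ : ℝ} (Q : PMF ℝ) (c S : ℝ) (hc : 0 ≤ c) (hS : 0 ≤ S)
    (hmean : ∑' z, Q z * ENNReal.ofReal z = ENNReal.ofReal S)
    (hsupp : ∀ y ∈ Q.support, 0 ≤ y) :
    ∑' z, Q z * ENNReal.ofReal (c + z) = ENNReal.ofReal (c + S) := by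
  calc ∑' z, Q z * ENNReal.ofReal (c + z)
      = ∑' z, Q z * (ENNReal.ofReal c + ENNReal.ofReal z) :=
        BP.tsum_congr_support Q fun z hz => by rw [ENNReal.ofReal_add hc (hsupp z hz)]
    _ = ∑' z, (Q z * ENNReal.ofReal c + Q z * ENNReal.ofReal z) := by
        exact tsum_congr fun z => mul_add _ _ _
    _ = ENNReal.ofReal c + ENNReal.ofReal S := by
        rw [ENNReal.tsum_add, BP.tsum_const_one, hmean]
    _ = ENNReal.ofReal (c + S) := (ENNReal.ofReal_add hc hS).symm

lemma BP.pmfVar_roundPMF {δ y : ℝ} (hδ : 0 < δ) (hy : 1 ≤ y) :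
    pmfVar (roundPMF δ y) = vR δ y := by
  have hss : (roundPMF δ y).support ⊆
      ↑({rfloor δ y, (1 + δ) ^ (rExp δ y + 1)} : Finset ℝ) := by
    intro z hz
    rcases BP.roundPMF_support hz with h | h <;> simp [h]
  rw [BP.pmfVar_eq _ _ hss (by
    intro x hx
    simp only [Finset.coe_insert, Finset.coe_singleton, Finset.mem_insert,
      Finset.mem_singleton] at hx
    have hf := BP.one_le_rfloor (y := y) hδ
    rcases hx with rfl | rfl
    · linarith
    · positivity)]
  rw [BP.roundPMF_mean hδ hy, BP.roundPMF_m2 hδ hy,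
    ENNReal.toReal_ofReal (by nlinarith [BP.vR_nonneg hδ hy]),
    ENNReal.toReal_ofReal (by linarith)]
  ring

theorem BP.tree_inv (δ : ℝ) (hδ : 0 < δ) (t : BTree)
    (hsc : ∀ y ∈ t.leafScores, 1 ≤ y) :
    (treePMF δ t).support ⊆ PowSet δ ∧
    (treePMF δ t).support.Finite ∧
    (∑' z, treePMF δ t z * ENNReal.ofReal z) = ENNReal.ofReal t.leafScores.sum ∧
    (∑' z, treePMF δ t z * ENNReal.ofReal (z ^ 2)) ≠ ⊤ ∧
    (∑' z, treePMF δ t z * ENNReal.ofReal (z ^ 2)).toReal ≤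
      (t.leafScores.map (fun y => pmfVar (roundPMF δ y))).sum
        + δ * pairSum t.leafScores + t.leafScores.sum ^ 2 := by
  induction t with
  | leaf y =>
    have hy : 1 ≤ y := hsc y (by simp [BTree.leafScores])
    have hsum : (BTree.leaf y).leafScores.sum = y := by simp [BTree.leafScores]
    refine ⟨BP.roundPMF_support_pow, BP.roundPMF_support_finite, ?_, ?_, ?_⟩
    · rw [show treePMF δ (BTree.leaf y) = roundPMF δ y from rfl, BP.roundPMF_mean hδ hy, hsum]
    · rw [show treePMF δ (BTree.leaf y) = roundPMF δ y from rfl, BP.roundPMF_m2 hδ hy]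
      exact ENNReal.ofReal_ne_top
    · rw [show treePMF δ (BTree.leaf y) = roundPMF δ y from rfl, BP.roundPMF_m2 hδ hy,
        ENNReal.toReal_ofReal (by nlinarith [BP.vR_nonneg hδ hy]), hsum]
      simp only [BTree.leafScores, List.map_cons, List.map_nil, List.sum_cons, List.sum_nil,
        add_zero, BP.pairSum_singleton, mul_zero]
      rw [BP.pmfVar_roundPMF hδ hy]
      linarith
  | node l r ihl ihr =>
    have hscl : ∀ y ∈ l.leafScores, 1 ≤ y := fun y hy =>
      hsc y (by simp [BTree.leafScores, hy])
    have hscr : ∀ y ∈ r.leafScores, 1 ≤ y := fun y hy =>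
      hsc y (by simp [BTree.leafScores, hy])
    obtain ⟨hPpow, hPfin, hPmean, hPne, hPvar⟩ := ihl hscl
    obtain ⟨hQpow, hQfin, hQmean, hQne, hQvar⟩ := ihr hscr
    set P := treePMF δ l with hP
    set Q := treePMF δ r with hQdef
    set S1 := l.leafScores.sum with hS1
    set S2 := r.leafScores.sum with hS2
    have hS1nn : 0 ≤ S1 := List.sum_nonneg fun y hy => le_trans zero_le_one (hscl y hy)
    have hS2nn : 0 ≤ S2 := List.sum_nonneg fun y hy => le_trans zero_le_one (hscr y hy)
    have hN : treePMF δ (BTree.node l r)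
        = P.bind fun x => Q.bind fun y => roundPMF δ (x + y) := rfl
    -- support
    have hsupp : (treePMF δ (BTree.node l r)).support ⊆ PowSet δ := by
      rw [hN, PMF.support_bind]
      intro z hz
      simp only [Set.mem_iUnion] at hz
      obtain ⟨x, -, hz⟩ := hz
      rw [PMF.support_bind] at hz
      simp only [Set.mem_iUnion] at hz
      obtain ⟨y, -, hz⟩ := hz
      exact BP.roundPMF_support_pow hz
    have hfin : (treePMF δ (BTree.node l r)).support.Finite := by
      rw [hN, PMF.support_bind]
      apply Set.Finite.biUnion hPfin
      intro x _
      rw [PMF.support_bind]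
      exact Set.Finite.biUnion hQfin fun y _ => BP.roundPMF_support_finite
    -- mean
    have hmean : (∑' z, treePMF δ (BTree.node l r) z * ENNReal.ofReal z)
        = ENNReal.ofReal (BTree.node l r).leafScores.sum := by
      rw [hN, BP.tsum_bind_mul]
      have hinner : ∀ x ∈ P.support,
          (∑' z, (Q.bind fun y => roundPMF δ (x + y)) z * ENNReal.ofReal z)
            = ENNReal.ofReal (x + S2) := by
        intro x hx
        have hx1 : 1 ≤ x := BP.mem_pow_one_le hδ (hPpow hx)
        rw [BP.tsum_bind_mul]
        have : ∀ y ∈ Q.support,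
            (∑' z, roundPMF δ (x + y) z * ENNReal.ofReal z) = ENNReal.ofReal (x + y) := by
          intro y hy
          have hy1 : 1 ≤ y := BP.mem_pow_one_le hδ (hQpow hy)
          exact BP.roundPMF_mean hδ (by linarith)
        rw [BP.tsum_congr_support Q this]
        exact BP.tsum_shift (δ := δ) Q x S2 (by linarith) hS2nn hQmean
          fun y hy => le_trans zero_le_one (BP.mem_pow_one_le hδ (hQpow hy))
      rw [BP.tsum_congr_support P hinner]
      have : ∀ x ∈ P.support, ENNReal.ofReal (x + S2) = ENNReal.ofReal (S2 + x) := by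
        intro x _; rw [add_comm]
      rw [BP.tsum_congr_support P this]
      rw [BP.tsum_shift (δ := δ) P S2 S1 hS2nn hS1nn hPmean
        fun x hx => le_trans zero_le_one (BP.mem_pow_one_le hδ (hPpow hx))]
      have : (BTree.node l r).leafScores.sum = S1 + S2 := by
        simp [BTree.leafScores, List.sum_append, hS1, hS2]
      rw [this, add_comm S2 S1]
    -- second moment bound
    set M2P := ∑' z, P z * ENNReal.ofReal (z ^ 2) with hM2P
    set M2Q := ∑' z, Q z * ENNReal.ofReal (z ^ 2) with hM2Q
    set bound := M2P + M2Q + ENNReal.ofReal (2 + δ) * ENNReal.ofReal S2 * ENNReal.ofReal S1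
      with hbound
    have hle : (∑' z, treePMF δ (BTree.node l r) z * ENNReal.ofReal (z ^ 2)) ≤ bound := by
      rw [hN, BP.tsum_bind_mul]
      have hJ : ∀ x ∈ P.support,
          (∑' z, (Q.bind fun y => roundPMF δ (x + y)) z * ENNReal.ofReal (z ^ 2))
            ≤ ENNReal.ofReal (x ^ 2) + M2Q
              + ENNReal.ofReal ((2 + δ) * x) * ENNReal.ofReal S2 := by
        intro x hx
        have hx1 : 1 ≤ x := BP.mem_pow_one_le hδ (hPpow hx)
        rw [BP.tsum_bind_mul]
        have h1 : ∀ y ∈ Q.support,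
            (∑' z, roundPMF δ (x + y) z * ENNReal.ofReal (z ^ 2))
              = ENNReal.ofReal ((x + y) ^ 2 + vR δ (x + y)) := by
          intro y hy
          have hy1 : 1 ≤ y := BP.mem_pow_one_le hδ (hQpow hy)
          exact BP.roundPMF_m2 hδ (by linarith)
        rw [BP.tsum_congr_support Q h1]
        have h2 : ∀ y ∈ Q.support,
            ENNReal.ofReal ((x + y) ^ 2 + vR δ (x + y))
              ≤ ENNReal.ofReal (x ^ 2) + ENNReal.ofReal (y ^ 2)
                + ENNReal.ofReal ((2 + δ) * x) * ENNReal.ofReal y := by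
          intro y hy
          have hy1 : 1 ≤ y := BP.mem_pow_one_le hδ (hQpow hy)
          have hcross := BP.vR_le_cross hδ (hPpow hx) (hQpow hy)
          have hxy0 : (0:ℝ) ≤ (2 + δ) * x := by nlinarith
          rw [← ENNReal.ofReal_mul hxy0,
            ← ENNReal.ofReal_add (by positivity) (by positivity),
            ← ENNReal.ofReal_add (by positivity) (by nlinarith)]
          exact ENNReal.ofReal_le_ofReal (by nlinarith)
        calc (∑' y, Q y * ENNReal.ofReal ((x + y) ^ 2 + vR δ (x + y)))
            ≤ ∑' y, Q y * (ENNReal.ofReal (x ^ 2) + ENNReal.ofReal (y ^ 2)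
                + ENNReal.ofReal ((2 + δ) * x) * ENNReal.ofReal y) :=
              BP.tsum_mono_support Q h2
          _ = ∑' y, (Q y * ENNReal.ofReal (x ^ 2) + Q y * ENNReal.ofReal (y ^ 2)
              + ENNReal.ofReal ((2 + δ) * x) * (Q y * ENNReal.ofReal y)) :=
              tsum_congr fun y => by ring
          _ = (∑' y, Q y * ENNReal.ofReal (x ^ 2))
              + (∑' y, Q y * ENNReal.ofReal (y ^ 2))
              + ∑' y, ENNReal.ofReal ((2 + δ) * x) * (Q y * ENNReal.ofReal y) := by
              rw [ENNReal.tsum_add, ENNReal.tsum_add]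
          _ = ENNReal.ofReal (x ^ 2) + M2Q
              + ENNReal.ofReal ((2 + δ) * x) * ENNReal.ofReal S2 := by
              rw [BP.tsum_const_one, ENNReal.tsum_mul_left, hQmean, ← hM2Q]
      calc (∑' x, P x * ∑' z, (Q.bind fun y => roundPMF δ (x + y)) z * ENNReal.ofReal (z ^ 2))
          ≤ ∑' x, P x * (ENNReal.ofReal (x ^ 2) + M2Q
              + ENNReal.ofReal ((2 + δ) * x) * ENNReal.ofReal S2) := BP.tsum_mono_support P hJ
        _ = ∑' x, P x * (ENNReal.ofReal (x ^ 2) + M2Q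
              + (ENNReal.ofReal (2 + δ) * ENNReal.ofReal S2) * ENNReal.ofReal x) :=
            BP.tsum_congr_support P fun x hx => by
              have hx1 : 1 ≤ x := BP.mem_pow_one_le hδ (hPpow hx)
              rw [ENNReal.ofReal_mul (by linarith : (0:ℝ) ≤ 2 + δ)]
              ring
        _ = ∑' x, (P x * ENNReal.ofReal (x ^ 2) + P x * M2Q
              + (ENNReal.ofReal (2 + δ) * ENNReal.ofReal S2) * (P x * ENNReal.ofReal x)) :=
            tsum_congr fun x => by ring
        _ = (∑' x, P x * ENNReal.ofReal (x ^ 2)) + (∑' x, P x * M2Q)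
              + ∑' x, (ENNReal.ofReal (2 + δ) * ENNReal.ofReal S2) * (P x * ENNReal.ofReal x) := by
            rw [ENNReal.tsum_add, ENNReal.tsum_add]
        _ = bound := by
            rw [BP.tsum_const_one, ENNReal.tsum_mul_left, hPmean, ← hM2P, hbound]
    have hboundne : bound ≠ ⊤ := by
      rw [hbound]
      exact ENNReal.add_ne_top.mpr ⟨ENNReal.add_ne_top.mpr ⟨hPne, hQne⟩,
        ENNReal.mul_ne_top (ENNReal.mul_ne_top ENNReal.ofReal_ne_top ENNReal.ofReal_ne_top)
          ENNReal.ofReal_ne_top⟩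
    have hm2ne : (∑' z, treePMF δ (BTree.node l r) z * ENNReal.ofReal (z ^ 2)) ≠ ⊤ :=
      ne_top_of_le_ne_top hboundne hle
    refine ⟨hsupp, hfin, hmean, hm2ne, ?_⟩
    have htr : (∑' z, treePMF δ (BTree.node l r) z * ENNReal.ofReal (z ^ 2)).toReal
        ≤ M2P.toReal + M2Q.toReal + (2 + δ) * S2 * S1 := by
      have := ENNReal.toReal_mono hboundne hle
      rwa [hbound, ENNReal.toReal_add (ENNReal.add_ne_top.mpr ⟨hPne, hQne⟩)
          (ENNReal.mul_ne_top (ENNReal.mul_ne_top ENNReal.ofReal_ne_top ENNReal.ofReal_ne_top)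
            ENNReal.ofReal_ne_top),
        ENNReal.toReal_add hPne hQne, ENNReal.toReal_mul, ENNReal.toReal_mul,
        ENNReal.toReal_ofReal (by linarith), ENNReal.toReal_ofReal hS2nn,
        ENNReal.toReal_ofReal hS1nn] at this
    have hlists : (BTree.node l r).leafScores = l.leafScores ++ r.leafScores := rfl
    rw [hlists, BP.pairSum_append, List.map_append, List.sum_append, List.sum_append]
    rw [← hS1, ← hS2]
    nlinarith [htr, hPvar, hQvar]

/-- Under the rounded binary-tree process, for every node `v` of `T`,
`Var(X_v) ≤ Σ_{l ∈ L(v)} Var(X_l) + δ · Σ_{g,h ∈ L(v), g < h} score(g)·score(h)`,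
the second sum ranging over unordered pairs of distinct leaves of the subtree rooted at `v`. -/
theorem treePMF_variance_total (δ : ℝ) (hδ : 0 < δ) (t : BTree)
    (hscores : ∀ y ∈ t.leafScores, 1 ≤ y) :
    pmfVar (treePMF δ t) ≤
      (t.leafScores.map (fun y => pmfVar (roundPMF δ y))).sum + δ * pairSum t.leafScores := by
  obtain ⟨hpow, hfin, hmean, hne, hvar⟩ := BP.tree_inv δ hδ t hscores
  have hS : 0 ≤ t.leafScores.sum :=
    List.sum_nonneg fun y hy => le_trans zero_le_one (hscores y hy)
  have hss : (treePMF δ t).support ⊆ ↑hfin.toFinset := by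
    intro z hz; simpa using hz
  have hnn : ∀ x ∈ hfin.toFinset, (0:ℝ) ≤ x := by
    intro x hx
    have : x ∈ (treePMF δ t).support := by simpa using hx
    exact le_trans zero_le_one (BP.mem_pow_one_le hδ (hpow this))
  rw [BP.pmfVar_eq _ _ hss hnn, hmean, ENNReal.toReal_ofReal hS]
  linarith [hvar]
end
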